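/- arXiv:1909.09875 — 8 statements merged into one kernel-verified Lean document; each statement's English description precedes it below -/
import Mathlib

section
/- Consider the polyhedron Λ = {(α, β) ∈ ℝ^J × ℝ^I : β_i + α_j ≤ 0 for all i ∈ [I] and j ∈ P_i, and c_e ≤ α_j ≤ c_x for all j ∈ [J]}, where c_e ≤ c_x are real constants and each P_i ⊆ [J] is nonempty. Then every extreme point (ᾱ, β̄) of Λ satisfies ᾱ_j ∈ {c_e, c_x} for all j ∈ [J] and β̄_i = −max{ᾱ_j : j ∈ P_i} for all i ∈ [I]. -/
lemma midpoint_not_extreme {E : Type*} [AddCommGroup E] [Module ℝ E] {s : Set E} {x d : E}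
    (hd : d ≠ 0) (h1 : x + d ∈ s) (h2 : x - d ∈ s) : x ∉ Set.extremePoints ℝ s := by
  intro hx
  have hmem : x ∈ openSegment ℝ (x + d) (x - d) :=
    ⟨1/2, 1/2, by norm_num, by norm_num, by norm_num, by module⟩
  have h := hx.2 h1 h2 hmem
  exact hd (by simpa using congrArg (fun y => y - x) h)

/-- every extreme point `(ᾱ, β̄)` of the polyhedron
`Λ = {(α, β) : β_i + α_j ≤ 0 ∀ i, j ∈ P_i;  c_e ≤ α_j ≤ c_x ∀ j}`
satisfies `ᾱ_j ∈ {c_e, c_x}` for all `j` and `β̄_i = -max{ᾱ_j : j ∈ P_i}` for all `i`. -/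
theorem extreme_points_of_dual_region
    (I J : ℕ) (ce cx : ℝ) (hc : ce ≤ cx)
    (P : Fin I → Finset (Fin J)) (hP : ∀ i, (P i).Nonempty) :
    ∀ x ∈ Set.extremePoints ℝ
        {p : (Fin J → ℝ) × (Fin I → ℝ) |
          (∀ i : Fin I, ∀ j ∈ P i, p.2 i + p.1 j ≤ 0) ∧
          (∀ j : Fin J, ce ≤ p.1 j ∧ p.1 j ≤ cx)},
      (∀ j : Fin J, x.1 j = ce ∨ x.1 j = cx) ∧
      (∀ i : Fin I, x.2 i = -((P i).sup' (hP i) (fun j => x.1 j))) := by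
  rintro ⟨α, β⟩ hx
  obtain ⟨hβc, hbox⟩ := hx.1
  simp only at hβc hbox
  set M : Fin I → ℝ := fun i => (P i).sup' (hP i) α with hMdef
  have hβM : ∀ i, β i + M i ≤ 0 := by
    intro i
    obtain ⟨j0, hj0, hj0e⟩ := Finset.exists_mem_eq_sup' (hP i) α
    rw [hMdef]; simp only; rw [hj0e]; exact hβc i j0 hj0
  constructor
  · -- α j ∈ {ce, cx}
    intro j
    by_contra hcon
    push_neg at hcon
    obtain ⟨hne, hnx⟩ := hcon
    have h1 : ce < α j := lt_of_le_of_ne (hbox j).1 (Ne.symm hne)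
    have h2 : α j < cx := lt_of_le_of_ne (hbox j).2 hnx
    set u : Fin J → ℝ := fun j' => if α j' = α j then 1 else 0 with hu
    set v : Fin I → ℝ := fun i => if M i = α j then -1 else 0 with hv
    set T : Finset (Fin I × Fin J) :=
      Finset.univ.filter (fun p => p.2 ∈ P p.1 ∧ β p.1 + α p.2 < 0) with hT
    set G : Finset ℝ :=
      insert (cx - α j) (insert (α j - ce) (T.image (fun p => -(β p.1 + α p.2)))) with hG
    have hGne : G.Nonempty := ⟨cx - α j, by simp [hG]⟩
    set ε : ℝ := G.inf' hGne id with hε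
    have hεpos : 0 < ε := by
      rw [hε, Finset.lt_inf'_iff]
      intro b hb
      simp only [hG, Finset.mem_insert, Finset.mem_image] at hb
      rcases hb with rfl | rfl | ⟨p, hp, rfl⟩
      · simp only [id]; linarith
      · simp only [id]; linarith
      · simp only [hT, Finset.mem_filter] at hp
        simp only [id]
        linarith [hp.2.2]
    have hεcx : ε ≤ cx - α j := Finset.inf'_le _ (by simp [hG])
    have hεce : ε ≤ α j - ce := Finset.inf'_le _ (by simp [hG])
    have hεT : ∀ p ∈ T, ε ≤ -(β p.1 + α p.2) := by
      intro p hp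
      apply Finset.inf'_le
      simp only [hG, Finset.mem_insert, Finset.mem_image]
      exact Or.inr (Or.inr ⟨p, hp, rfl⟩)
    have key : ∀ σ : ℝ, |σ| ≤ 1 →
        ((fun j' => α j' + σ * ε * u j'), (fun i => β i + σ * ε * v i)) ∈
          {p : (Fin J → ℝ) × (Fin I → ℝ) |
            (∀ i : Fin I, ∀ j ∈ P i, p.2 i + p.1 j ≤ 0) ∧
            (∀ j : Fin J, ce ≤ p.1 j ∧ p.1 j ≤ cx)} := by
      intro σ hσ
      have hσε : σ * ε ≤ ε := by
        calc σ * ε ≤ |σ * ε| := le_abs_self _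
        _ = |σ| * ε := by rw [abs_mul, abs_of_pos hεpos]
        _ ≤ 1 * ε := by nlinarith
        _ = ε := one_mul ε
      have hσε' : -ε ≤ σ * ε := by
        have := neg_abs_le (σ * ε)
        have h2 : |σ * ε| ≤ ε := by
          rw [abs_mul, abs_of_pos hεpos]; nlinarith
        linarith
      constructor
      · intro i j' hj'
        simp only
        by_cases hu' : α j' = α j <;> by_cases hv' : M i = α j <;>
          simp only [hu, hv, hu', hv', if_pos, if_neg, if_true, if_false]
        · -- both: cancel
          have := hβc i j' hj'; ring_nf; linarith
        · -- α j' = α j, M i ≠ α j : slack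
          have hle : α j ≤ M i := hu' ▸ Finset.le_sup' α hj'
          have hlt : α j < M i := lt_of_le_of_ne hle (Ne.symm hv')
          have hslack : β i + α j' < 0 := by
            have := hβM i; rw [hu']; linarith
          have hmemT : (i, j') ∈ T := by
            simp only [hT, Finset.mem_filter]; exact ⟨Finset.mem_univ _, hj', hslack⟩
          have := hεT _ hmemT
          simp only at this
          nlinarith
        · -- α j' ≠ α j, M i = α j : slack
          have hle : α j' ≤ M i := Finset.le_sup' α hj'
          have hlt : α j' < M i := lt_of_le_of_ne hle (by rw [hv']; exact hu')
          have hslack : β i + α j' < 0 := by have := hβM i; linarith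
          have hmemT : (i, j') ∈ T := by
            simp only [hT, Finset.mem_filter]; exact ⟨Finset.mem_univ _, hj', hslack⟩
          have := hεT _ hmemT
          simp only at this
          nlinarith
        · have := hβc i j' hj'; ring_nf; linarith
      · intro j'
        simp only
        by_cases hu' : α j' = α j <;>
          simp only [hu, hu', if_pos, if_neg, if_true, if_false]
        · constructor
          · nlinarith
          · nlinarith
        · simpa using hbox j'
    set d : (Fin J → ℝ) × (Fin I → ℝ) := (ε • u, ε • v) with hd
    have hdne : d ≠ 0 := by
      intro h
      have h' := congrFun (congrArg Prod.fst h) j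
      simp [hd, hu] at h'
      linarith
    have e1 : (α, β) + d =
        ((fun j' => α j' + (1:ℝ) * ε * u j'), (fun i => β i + (1:ℝ) * ε * v i)) := by
      refine Prod.ext ?_ ?_ <;> funext t <;>
        simp [hd, mul_comm] <;> ring
    have e2 : (α, β) - d =
        ((fun j' => α j' + (-1:ℝ) * ε * u j'), (fun i => β i + (-1:ℝ) * ε * v i)) := by
      refine Prod.ext ?_ ?_ <;> funext t <;>
        simp [hd, sub_eq_add_neg] <;> ring
    have hm1 := key 1 (by norm_num)
    have hm2 := key (-1) (by norm_num)
    rw [← e1] at hm1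
    rw [← e2] at hm2
    exact midpoint_not_extreme hdne hm1 hm2 hx
  · -- β i = -M i
    intro i
    by_contra hcon
    have hβle : β i ≤ -M i := by linarith [hβM i]
    have hlt : β i < -M i := lt_of_le_of_ne hβle (by simpa [hMdef] using hcon)
    set ε : ℝ := (P i).inf' (hP i) (fun j => -(β i + α j)) with hε
    have hεpos : 0 < ε := by
      rw [hε, Finset.lt_inf'_iff]
      intro j hj
      have : α j ≤ M i := Finset.le_sup' α hj
      linarith
    have hεle : ∀ j ∈ P i, ε ≤ -(β i + α j) := fun j hj => Finset.inf'_le _ hj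
    set d : (Fin J → ℝ) × (Fin I → ℝ) := (0, fun i' => if i' = i then ε else 0) with hd
    have hdne : d ≠ 0 := by
      intro h
      have := congrFun (congrArg Prod.snd h) i
      simp [hd] at this
      linarith
    have hmem1 : (α, β) + d ∈ {p : (Fin J → ℝ) × (Fin I → ℝ) |
          (∀ i : Fin I, ∀ j ∈ P i, p.2 i + p.1 j ≤ 0) ∧
          (∀ j : Fin J, ce ≤ p.1 j ∧ p.1 j ≤ cx)} := by
      constructor
      · intro i' j' hj'
        simp only [hd, Prod.fst_add, Prod.snd_add, Pi.add_apply, Pi.zero_apply, add_zero]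
        by_cases hii : i' = i
        · rw [if_pos hii]; rw [hii] at hj' ⊢
          have := hεle j' hj'
          linarith
        · simp only [if_neg hii, add_zero]
          exact hβc i' j' hj'
      · intro j'
        simp only [hd, Prod.fst_add, Pi.add_apply, Pi.zero_apply, add_zero]
        exact hbox j'
    have hmem2 : (α, β) - d ∈ {p : (Fin J → ℝ) × (Fin I → ℝ) |
          (∀ i : Fin I, ∀ j ∈ P i, p.2 i + p.1 j ≤ 0) ∧
          (∀ j : Fin J, ce ≤ p.1 j ∧ p.1 j ≤ cx)} := by
      constructor
      · intro i' j' hj'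
        simp only [hd, Prod.fst_sub, Prod.snd_sub, Pi.sub_apply, Pi.zero_apply, sub_zero]
        by_cases hii : i' = i
        · rw [if_pos hii]; rw [hii] at hj' ⊢
          have := hβc i j' hj'
          linarith
        · simp only [if_neg hii, sub_zero]
          exact hβc i' j' hj'
      · intro j'
        simp only [hd, Prod.fst_sub, Pi.sub_apply, Pi.zero_apply, sub_zero]
        exact hbox j'
    exact midpoint_not_extreme hdne hmem1 hmem2 hx
end

section
/- Fix reals c_t_j, c_r_j for j ∈ [J] and c_p ∈ ℝ. Consider the linear program: maximize Σ_{j=1}^J (c_t_j t_j + c_r_j r_j) + c_p·p over (t, s, r, p) ≥ 0 subject to Σ_{j=1}^J s_j ≤ 1; s_j ≤ t_j and t_j ≤ Σ_{ℓ=j}^J s_ℓ for all j ∈ [J]; t_j + r_j = 1 for all j ∈ [J]; and Σ_{j=1}^J s_j + p = 1. Its optimal value equals max{ c_p + Σ_{ℓ=1}^J c_r_ℓ, max_{j ∈ [J]} { c_t_j + Σ_{ℓ=1}^{j−1} max{c_t_ℓ, c_r_ℓ} + Σ_{ℓ=j+1}^J c_r_ℓ } }. -/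
open Finset

section aux

variable {J : ℕ}

lemma filter_le_eq_insert (j : Fin J) :
    univ.filter (fun ℓ : Fin J => ℓ ≤ j) = insert j (univ.filter (fun ℓ => ℓ < j)) := by
  ext x
  simp [le_iff_lt_or_eq, or_comm]

lemma filter_not_lt_eq_insert (j : Fin J) :
    univ.filter (fun ℓ : Fin J => ¬ ℓ < j) = insert j (univ.filter (fun ℓ => j < ℓ)) := by
  ext x
  simp only [mem_filter, mem_univ, true_and, mem_insert, not_lt]
  constructor
  · intro h
    rcases eq_or_lt_of_le h with h | h
    · exact Or.inl h.symm
    · exact Or.inr h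
  · rintro (rfl | h)
    · exact le_refl _
    · exact h.le

lemma sum_split_three (j : Fin J) (f : Fin J → ℝ) :
    (∑ ℓ, f ℓ) = (∑ ℓ ∈ univ.filter (fun ℓ => ℓ < j), f ℓ) + f j
      + ∑ ℓ ∈ univ.filter (fun ℓ => j < ℓ), f ℓ := by
  rw [← Finset.sum_filter_add_sum_filter_not univ (fun ℓ => ℓ < j) f,
    filter_not_lt_eq_insert, Finset.sum_insert (by simp)]
  ring

lemma sup'_const_add {s : Finset (Fin J)} (hs : s.Nonempty) (c : ℝ) (g : Fin J → ℝ) :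
    s.sup' hs (fun j => c + g j) = c + s.sup' hs g := by
  apply le_antisymm
  · exact Finset.sup'_le _ _ fun j hj => (add_le_add_iff_left c).mpr (Finset.le_sup' g hj)
  · have : s.sup' hs g ≤ s.sup' hs (fun j => c + g j) - c :=
      Finset.sup'_le _ _ fun j hj => by
        have := Finset.le_sup' (fun j => c + g j) hj
        linarith
    linarith

end aux

/-- closed form for the one-pool worst-case linear program. -/
theorem one_pool_lp_closed_form
    (J : ℕ) (hJ : 0 < J) (ct cr : Fin J → ℝ) (cp : ℝ) :
    IsGreatest
      {v : ℝ | ∃ (t s r : Fin J → ℝ) (p : ℝ),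
        (∀ j, 0 ≤ t j) ∧ (∀ j, 0 ≤ s j) ∧ (∀ j, 0 ≤ r j) ∧ 0 ≤ p ∧
        (∑ j, s j) ≤ 1 ∧
        (∀ j, s j ≤ t j) ∧
        (∀ j : Fin J, t j ≤ ∑ ℓ ∈ Finset.univ.filter (fun ℓ => j ≤ ℓ), s ℓ) ∧
        (∀ j, t j + r j = 1) ∧
        (∑ j, s j) + p = 1 ∧
        v = (∑ j, (ct j * t j + cr j * r j)) + cp * p}
      (max (cp + ∑ ℓ, cr ℓ)
        (Finset.univ.sup' ⟨⟨0, hJ⟩, Finset.mem_univ _⟩ (fun j : Fin J =>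
          ct j + (∑ ℓ ∈ Finset.univ.filter (fun ℓ => ℓ < j), max (ct ℓ) (cr ℓ)) +
            ∑ ℓ ∈ Finset.univ.filter (fun ℓ => j < ℓ), cr ℓ))) := by
  have hne : (univ : Finset (Fin J)).Nonempty := ⟨⟨0, hJ⟩, mem_univ _⟩
  set d : Fin J → ℝ := fun j => ct j - cr j with hd
  set g : Fin J → ℝ := fun j => d j + ∑ ℓ ∈ univ.filter (fun ℓ => ℓ < j), max (d ℓ) 0 with hg
  have hfg : ∀ j : Fin J,
      ct j + (∑ ℓ ∈ univ.filter (fun ℓ => ℓ < j), max (ct ℓ) (cr ℓ)) +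
        ∑ ℓ ∈ univ.filter (fun ℓ => j < ℓ), cr ℓ = (∑ ℓ, cr ℓ) + g j := by
    intro j
    have h1 : ∑ ℓ ∈ univ.filter (fun ℓ => ℓ < j), max (ct ℓ) (cr ℓ)
        = ∑ ℓ ∈ univ.filter (fun ℓ => ℓ < j), (cr ℓ + max (d ℓ) 0) := by
      refine Finset.sum_congr rfl fun ℓ _ => ?_
      rcases le_total (cr ℓ) (ct ℓ) with h | h
      · rw [max_eq_left h, max_eq_left (by simp [hd]; linarith)]; simp [hd]
      · rw [max_eq_right h, max_eq_right (by simp [hd]; linarith)]; ring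
    rw [h1, Finset.sum_add_distrib, sum_split_three j cr]
    simp only [hg, hd]
    ring
  have hsup : (Finset.univ.sup' ⟨⟨0, hJ⟩, Finset.mem_univ _⟩ (fun j : Fin J =>
      ct j + (∑ ℓ ∈ Finset.univ.filter (fun ℓ => ℓ < j), max (ct ℓ) (cr ℓ)) +
        ∑ ℓ ∈ Finset.univ.filter (fun ℓ => j < ℓ), cr ℓ))
      = (∑ ℓ, cr ℓ) + Finset.univ.sup' hne g := by
    rw [← sup'_const_add hne]
    exact Finset.sup'_congr _ rfl fun j _ => hfg j
  constructor
  · -- membership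
    rcases le_total (Finset.univ.sup' hne g) cp with hcase | hcase
    · have hM : (max (cp + ∑ ℓ, cr ℓ)
          (Finset.univ.sup' ⟨⟨0, hJ⟩, Finset.mem_univ _⟩ (fun j : Fin J =>
            ct j + (∑ ℓ ∈ Finset.univ.filter (fun ℓ => ℓ < j), max (ct ℓ) (cr ℓ)) +
              ∑ ℓ ∈ Finset.univ.filter (fun ℓ => j < ℓ), cr ℓ)))
          = cp + ∑ ℓ, cr ℓ := by
        rw [hsup, max_eq_left (by linarith)]
      refine ⟨fun _ => 0, fun _ => 0, fun _ => 1, 1, ?_⟩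
      refine ⟨fun j => le_refl _, fun j => le_refl _, fun j => zero_le_one, zero_le_one,
        by simp, fun j => le_refl _, fun j => by simp, fun j => by simp, by simp, ?_⟩
      rw [hM]; simp [add_comm]
    · obtain ⟨j0, -, hj0⟩ := Finset.exists_mem_eq_sup' hne g
      have hM : (max (cp + ∑ ℓ, cr ℓ)
          (Finset.univ.sup' ⟨⟨0, hJ⟩, Finset.mem_univ _⟩ (fun j : Fin J =>
            ct j + (∑ ℓ ∈ Finset.univ.filter (fun ℓ => ℓ < j), max (ct ℓ) (cr ℓ)) +
              ∑ ℓ ∈ Finset.univ.filter (fun ℓ => j < ℓ), cr ℓ)))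
          = (∑ ℓ, cr ℓ) + g j0 := by
        rw [hsup, max_eq_right (by linarith), hj0]
      set t : Fin J → ℝ := fun ℓ =>
        (if ℓ = j0 then 1 else 0) + (if ℓ < j0 ∧ cr ℓ ≤ ct ℓ then 1 else 0) with ht
      set s : Fin J → ℝ := fun ℓ => if ℓ = j0 then 1 else 0 with hs
      have hssum : (∑ ℓ, s ℓ) = 1 := by simp [hs]
      have ht01 : ∀ ℓ, 0 ≤ t ℓ ∧ t ℓ ≤ 1 := by
        intro ℓ
        rcases eq_or_ne ℓ j0 with rfl | h1
        · simp only [ht, if_pos rfl,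
            if_neg (fun h : ℓ < ℓ ∧ cr ℓ ≤ ct ℓ => lt_irrefl ℓ h.1)]
          norm_num
        · simp only [ht, if_neg h1, zero_add]
          split_ifs <;> norm_num
      refine ⟨t, s, fun ℓ => 1 - t ℓ, 0, fun ℓ => (ht01 ℓ).1,
        fun ℓ => by simp only [hs]; split_ifs <;> norm_num,
        fun ℓ => by have := (ht01 ℓ).2; show (0:ℝ) ≤ 1 - t ℓ; linarith,
        le_refl _, by rw [hssum],
        fun ℓ => ?_, fun j => ?_, fun ℓ => by ring, by rw [hssum]; ring, ?_⟩
      · -- s ≤ t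
        simp only [hs, ht]
        have : (0:ℝ) ≤ if ℓ < j0 ∧ cr ℓ ≤ ct ℓ then 1 else 0 := by positivity
        linarith
      · -- t j ≤ ∑_{ℓ ≥ j} s ℓ
        have hsum : (∑ ℓ ∈ Finset.univ.filter (fun ℓ => j ≤ ℓ), s ℓ)
            = if j ≤ j0 then 1 else 0 := by
          simp only [hs]
          rw [Finset.sum_ite_eq' (Finset.univ.filter (fun ℓ => j ≤ ℓ)) j0 (fun _ => (1:ℝ))]
          simp
        rw [hsum]
        rcases eq_or_ne j j0 with rfl | h1
        · simp only [ht, if_pos rfl,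
            if_neg (fun h : j < j ∧ cr j ≤ ct j => lt_irrefl j h.1), if_pos (le_refl j)]
          norm_num
        · simp only [ht, if_neg h1, zero_add]
          split_ifs with h2 h3 <;> first | exact absurd h2.1.le h3 | norm_num
      · -- value
        have hval : (∑ j, (ct j * t j + cr j * (1 - t j)))
            = (∑ ℓ, cr ℓ) + ∑ j, d j * t j := by
          rw [← Finset.sum_add_distrib]
          refine Finset.sum_congr rfl fun j _ => ?_
          simp only [hd]; ring
        have hdt : (∑ j, d j * t j) = g j0 := by
          have h1 : (∑ j, d j * t j)
              = (∑ j, (if j = j0 then d j else 0)) +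
                ∑ j, (if j < j0 ∧ cr j ≤ ct j then d j else 0) := by
            rw [← Finset.sum_add_distrib]
            refine Finset.sum_congr rfl fun j _ => ?_
            simp only [ht, mul_add, mul_ite, mul_one, mul_zero]
          have h2 : (∑ j, (if j = j0 then d j else 0)) = d j0 := by
            rw [Finset.sum_ite_eq' univ j0 d]; simp
          have h3 : (∑ j, (if j < j0 ∧ cr j ≤ ct j then d j else 0))
              = ∑ ℓ ∈ univ.filter (fun ℓ => ℓ < j0), max (d ℓ) 0 := by
            have hmx : ∑ ℓ ∈ univ.filter (fun ℓ => ℓ < j0), max (d ℓ) 0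
                = ∑ ℓ ∈ univ.filter (fun ℓ => ℓ < j0), (if cr ℓ ≤ ct ℓ then d ℓ else 0) := by
              refine Finset.sum_congr rfl fun ℓ _ => ?_
              rcases le_or_gt (cr ℓ) (ct ℓ) with h | h
              · rw [if_pos h, max_eq_left (by simp only [hd]; linarith)]
              · rw [if_neg (not_le.mpr h),
                  max_eq_right (by simp only [hd]; linarith)]
            rw [hmx, ← Finset.sum_filter, ← Finset.sum_filter, Finset.filter_filter]
          rw [h1, h2, h3, hg]
        rw [hM, hval, hdt]; ring
  · -- upper bound
    rintro v ⟨t, s, r, p, h0t, h0s, h0r, h0p, hs1, hst, hts, htr, hsp, hv⟩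
    have hr : ∀ j, r j = 1 - t j := fun j => by linarith [htr j]
    have hv' : v = (∑ ℓ, cr ℓ) + (cp * p + ∑ j, d j * t j) := by
      rw [hv]
      have : (∑ j, (ct j * t j + cr j * r j)) = (∑ ℓ, cr ℓ) + ∑ j, d j * t j := by
        rw [← Finset.sum_add_distrib]
        refine Finset.sum_congr rfl fun j _ => ?_
        rw [hr j]
        show ct j * t j + cr j * (1 - t j) = cr j + (ct j - cr j) * t j
        ring
      rw [this]; ring
    set M' : ℝ := max cp (univ.sup' hne g) with hM'
    have hgle : ∀ ℓ, g ℓ ≤ M' := fun ℓ =>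
      le_trans (Finset.le_sup' g (mem_univ ℓ)) (le_max_right _ _)
    have step1 : ∀ j, d j * t j ≤
        max (d j) 0 * (∑ ℓ ∈ univ.filter (fun ℓ => j ≤ ℓ), s ℓ) + min (d j) 0 * s j := by
      intro j
      have ha : max (d j) 0 * t j
          ≤ max (d j) 0 * ∑ ℓ ∈ univ.filter (fun ℓ => j ≤ ℓ), s ℓ := by
        have h0 : (0:ℝ) ≤ max (d j) 0 := le_max_right _ _
        nlinarith [hts j]
      have hb : min (d j) 0 * t j ≤ min (d j) 0 * s j := by
        have h0 : min (d j) 0 ≤ 0 := min_le_right _ _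
        nlinarith [hst j]
      have hc : d j * t j = max (d j) 0 * t j + min (d j) 0 * t j := by
        rw [← add_mul, max_add_min, add_zero]
      linarith
    have step2 : (∑ j, (max (d j) 0 * (∑ ℓ ∈ univ.filter (fun ℓ => j ≤ ℓ), s ℓ)
        + min (d j) 0 * s j)) = ∑ ℓ, g ℓ * s ℓ := by
      rw [Finset.sum_add_distrib]
      have hswap : (∑ j, max (d j) 0 * ∑ ℓ ∈ univ.filter (fun ℓ => j ≤ ℓ), s ℓ)
          = ∑ ℓ, (∑ j ∈ univ.filter (fun j => j ≤ ℓ), max (d j) 0) * s ℓ := by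
        simp_rw [Finset.mul_sum, Finset.sum_mul]
        exact Finset.sum_comm' (fun x y => by simp)
      rw [hswap, ← Finset.sum_add_distrib]
      refine Finset.sum_congr rfl fun ℓ _ => ?_
      rw [filter_le_eq_insert, Finset.sum_insert (by simp)]
      have hmm : max (d ℓ) 0 + min (d ℓ) 0 = d ℓ + 0 := max_add_min _ _
      simp only [hg]
      linear_combination s ℓ * hmm
    have hsumdt : (∑ j, d j * t j) ≤ ∑ ℓ, g ℓ * s ℓ := by
      rw [← step2]
      exact Finset.sum_le_sum fun j _ => step1 j
    have step3 : cp * p + ∑ ℓ, g ℓ * s ℓ ≤ M' * p + ∑ ℓ, M' * s ℓ :=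
      add_le_add (mul_le_mul_of_nonneg_right (le_max_left _ _) h0p)
        (Finset.sum_le_sum fun ℓ _ => mul_le_mul_of_nonneg_right (hgle ℓ) (h0s ℓ))
    have step4 : M' * p + ∑ ℓ, M' * s ℓ = M' := by
      rw [← Finset.mul_sum, ← mul_add]
      have : p + ∑ ℓ, s ℓ = 1 := by linarith
      rw [this, mul_one]
    have hMeq : (max (cp + ∑ ℓ, cr ℓ)
        (Finset.univ.sup' ⟨⟨0, hJ⟩, Finset.mem_univ _⟩ (fun j : Fin J =>
          ct j + (∑ ℓ ∈ Finset.univ.filter (fun ℓ => ℓ < j), max (ct ℓ) (cr ℓ)) +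
            ∑ ℓ ∈ Finset.univ.filter (fun ℓ => j < ℓ), cr ℓ)))
        = (∑ ℓ, cr ℓ) + M' := by
      rw [hsup, hM', ← max_add_add_left, add_comm (∑ ℓ, cr ℓ) cp]
    rw [hMeq]
    linarith
end

section
/- Let H = {(t, s, r, p) ∈ {0,1}^J × {0,1}^J × ℝ^J × ℝ : Σ_j s_j ≤ 1; s_j ≤ t_j for all j; t_j + s_ℓ ≤ 1 for all j > ℓ; t_j ≤ Σ_ℓ s_ℓ for all j; t_j + r_j = 1 for all j; Σ_j s_j + p = 1}. Then for every (t, s, r, p) ∈ H and every j ∈ [J], the inequality t_j ≤ Σ_{ℓ ≥ j} s_ℓ holds. -/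
/-- the valid inequality `t_j ≤ Σ_{ℓ ≥ j} s_ℓ` holds on the single-pool
mixed-integer set `H`. -/
theorem valid_inequality_one_pool
    (J : ℕ) (t s r : Fin J → ℝ) (p : ℝ)
    (ht : ∀ j, t j = 0 ∨ t j = 1) (hs : ∀ j, s j = 0 ∨ s j = 1)
    (h1 : (∑ j, s j) ≤ 1)
    (h2 : ∀ j, s j ≤ t j)
    (h3 : ∀ j ℓ : Fin J, ℓ < j → t j + s ℓ ≤ 1)
    (h4 : ∀ j : Fin J, t j ≤ ∑ ℓ, s ℓ)
    (h5 : ∀ j, t j + r j = 1)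
    (h6 : (∑ j, s j) + p = 1) :
    ∀ j : Fin J, t j ≤ ∑ ℓ ∈ Finset.univ.filter (fun ℓ => j ≤ ℓ), s ℓ := by
  intro j
  have hs0 : ∀ ℓ, 0 ≤ s ℓ := fun ℓ => by rcases hs ℓ with h | h <;> simp [h]
  rcases ht j with h | h
  · rw [h]
    exact Finset.sum_nonneg fun ℓ _ => hs0 ℓ
  · rw [h]
    have hzero : ∀ ℓ : Fin J, ¬ j ≤ ℓ → s ℓ = 0 := by
      intro ℓ hℓ
      have hlt : ℓ < j := lt_of_not_ge hℓ
      have := h3 j ℓ hlt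
      rw [h] at this
      linarith [hs0 ℓ]
    have hsplit := Finset.sum_filter_add_sum_filter_not Finset.univ
      (fun ℓ => j ≤ ℓ) s
    have hnot : ∑ ℓ ∈ Finset.univ.filter (fun ℓ => ¬ j ≤ ℓ), s ℓ = 0 :=
      Finset.sum_eq_zero fun ℓ hℓ => hzero ℓ (Finset.mem_filter.mp hℓ).2
    have htot : (1 : ℝ) ≤ ∑ ℓ, s ℓ := h ▸ h4 j
    have : ∑ ℓ ∈ Finset.univ.filter (fun ℓ => j ≤ ℓ), s ℓ = ∑ ℓ, s ℓ := by
      rw [← hsplit, hnot, add_zero]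
    linarith
end

section
/- Let H = {(t, s, r, p) ∈ {0,1}^J × {0,1}^J × ℝ^J × ℝ : Σ_j s_j ≤ 1; s_j ≤ t_j for all j; t_j + s_ℓ ≤ 1 for all j > ℓ; t_j ≤ Σ_ℓ s_ℓ for all j; t_j + r_j = 1 for all j; Σ_j s_j + p = 1}, and let H̄ = {(t, s, r, p) ≥ 0 : Σ_j s_j ≤ 1; s_j ≤ t_j for all j; t_j ≤ Σ_{ℓ ≥ j} s_ℓ for all j; t_j + r_j = 1 for all j; Σ_j s_j + p = 1}. Then conv(H) = H̄. -/
set_option linter.unnecessarySeqFocus false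

lemma interval_sum_aux (b : ℕ → ℝ) (N i₁ i₂ : ℕ) (h12 : i₁ ≤ i₂) (h2 : i₂ ≤ N)
    (hmono : ∀ i j, i < j → j ≤ N → b i < b j) (a a' : ℝ) (ha : a = b i₁) (ha' : a' = b i₂) :
    ∑ i ∈ Finset.range N, (b (i + 1) - b i) * (if a ≤ b i ∧ b i < a' then 1 else 0)
      = a' - a := by
  have key : ∀ i, i < N → ((a ≤ b i ∧ b i < a') ↔ (i₁ ≤ i ∧ i < i₂)) := by
    intro i hi
    subst ha ha'
    constructor
    · rintro ⟨hA, hB⟩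
      constructor
      · by_contra h
        push_neg at h
        have := hmono i i₁ h (le_trans h12 h2)
        linarith
      · by_contra h
        push_neg at h
        rcases Nat.lt_or_ge i₂ i with h' | h'
        · have := hmono i₂ i h' (le_of_lt hi)
          linarith
        · have : i = i₂ := le_antisymm h' h
          subst this; linarith
    · rintro ⟨hA, hB⟩
      constructor
      · rcases Nat.lt_or_ge i₁ i with h' | h'
        · exact le_of_lt (hmono i₁ i h' (le_of_lt hi))
        · have : i = i₁ := le_antisymm h' (by omega)
          subst this; exact le_refl _
      · exact hmono i i₂ hB h2
  have hfil : (Finset.range N).filter (fun i => a ≤ b i ∧ b i < a') = Finset.Ico i₁ i₂ := by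
    ext i
    simp only [Finset.mem_filter, Finset.mem_range, Finset.mem_Ico]
    constructor
    · rintro ⟨hi, h⟩
      exact (key i hi).1 h
    · rintro ⟨hA, hB⟩
      have hi : i < N := by omega
      exact ⟨hi, (key i hi).2 ⟨hA, hB⟩⟩
  calc ∑ i ∈ Finset.range N, (b (i + 1) - b i) * (if a ≤ b i ∧ b i < a' then 1 else 0)
      = ∑ i ∈ (Finset.range N).filter (fun i => a ≤ b i ∧ b i < a'), (b (i + 1) - b i) := by
        rw [Finset.sum_filter]
        exact Finset.sum_congr rfl fun i _ => by split_ifs <;> ring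
    _ = ∑ i ∈ Finset.Ico i₁ i₂, (b (i + 1) - b i) := by rw [hfil]
    _ = a' - a := by
        rw [Finset.sum_Ico_eq_sub _ h12, Finset.sum_range_sub, Finset.sum_range_sub, ha, ha']
        ring

/-- single-pool convex hull characterization, `conv(H) = H̄`. -/
theorem convexHull_one_pool_set
    (J : ℕ) :
    convexHull ℝ
      {x : (Fin J → ℝ) × (Fin J → ℝ) × (Fin J → ℝ) × ℝ |
        (∀ j, x.1 j = 0 ∨ x.1 j = 1) ∧ (∀ j, x.2.1 j = 0 ∨ x.2.1 j = 1) ∧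
        (∑ j, x.2.1 j) ≤ 1 ∧
        (∀ j, x.2.1 j ≤ x.1 j) ∧
        (∀ j ℓ : Fin J, ℓ < j → x.1 j + x.2.1 ℓ ≤ 1) ∧
        (∀ j : Fin J, x.1 j ≤ ∑ ℓ, x.2.1 ℓ) ∧
        (∀ j, x.1 j + x.2.2.1 j = 1) ∧
        (∑ j, x.2.1 j) + x.2.2.2 = 1}
      =
      {x : (Fin J → ℝ) × (Fin J → ℝ) × (Fin J → ℝ) × ℝ |
        (∀ j, 0 ≤ x.1 j) ∧ (∀ j, 0 ≤ x.2.1 j) ∧ (∀ j, 0 ≤ x.2.2.1 j) ∧ 0 ≤ x.2.2.2 ∧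
        (∑ j, x.2.1 j) ≤ 1 ∧
        (∀ j, x.2.1 j ≤ x.1 j) ∧
        (∀ j : Fin J, x.1 j ≤ ∑ ℓ ∈ Finset.univ.filter (fun ℓ => j ≤ ℓ), x.2.1 ℓ) ∧
        (∀ j, x.1 j + x.2.2.1 j = 1) ∧
        (∑ j, x.2.1 j) + x.2.2.2 = 1} := by
  apply Set.Subset.antisymm
  · classical
    apply convexHull_min
    · rintro x ⟨ht01, hs01, hsum, hst, hcompat, hts, htr, hsp⟩
      refine ⟨?_, ?_, ?_, ?_, hsum, hst, ?_, htr, hsp⟩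
      · intro j; rcases ht01 j with h | h <;> rw [h] <;> norm_num
      · intro j; rcases hs01 j with h | h <;> rw [h] <;> norm_num
      · intro j; have := htr j; rcases ht01 j with h | h <;> rw [h] at this <;> linarith
      · linarith [hsp, hsum]
      · intro j
        rcases ht01 j with h | h
        · rw [h]
          exact Finset.sum_nonneg fun ℓ _ => by rcases hs01 ℓ with h' | h' <;> rw [h'] <;> norm_num
        · rw [h]
          have hzero : ∀ ℓ : Fin J, ℓ < j → x.2.1 ℓ = 0 := by
            intro ℓ hℓ
            have h2 := hcompat j ℓ hℓ
            rw [h] at h2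
            rcases hs01 ℓ with h' | h'
            · exact h'
            · linarith
          have hsplit := Finset.sum_filter_add_sum_filter_not Finset.univ
            (fun ℓ : Fin J => j ≤ ℓ) x.2.1
          have hz2 : ∑ ℓ ∈ Finset.univ.filter (fun ℓ : Fin J => ¬ j ≤ ℓ), x.2.1 ℓ = 0 :=
            Finset.sum_eq_zero (by
              intro ℓ hℓ
              simp only [Finset.mem_filter, Finset.mem_univ, true_and, not_le] at hℓ
              exact hzero ℓ hℓ)
          have := hts j; rw [h] at this
          linarith
    · intro x hx y hy a b2 ha hb2 hab
      obtain ⟨p1, p2, p3, p4, p5, p6, p7, p8, p9⟩ := hx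
      obtain ⟨q1, q2, q3, q4, q5, q6, q7, q8, q9⟩ := hy
      simp only [Set.mem_setOf_eq, Prod.fst_add, Prod.snd_add, Prod.smul_fst, Prod.smul_snd,
        Pi.add_apply, Pi.smul_apply, smul_eq_mul]
      have hA1 : a * (∑ j, x.2.1 j) ≤ a * 1 := mul_le_mul_of_nonneg_left p5 ha
      have hA2 : b2 * (∑ j, y.2.1 j) ≤ b2 * 1 := mul_le_mul_of_nonneg_left q5 hb2
      refine ⟨?_, ?_, ?_, ?_, ?_, ?_, ?_, ?_, ?_⟩
      · intro j; exact add_nonneg (mul_nonneg ha (p1 j)) (mul_nonneg hb2 (q1 j))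
      · intro j; exact add_nonneg (mul_nonneg ha (p2 j)) (mul_nonneg hb2 (q2 j))
      · intro j; exact add_nonneg (mul_nonneg ha (p3 j)) (mul_nonneg hb2 (q3 j))
      · exact add_nonneg (mul_nonneg ha p4) (mul_nonneg hb2 q4)
      · rw [Finset.sum_add_distrib, ← Finset.mul_sum, ← Finset.mul_sum]
        linarith
      · intro j
        exact add_le_add (mul_le_mul_of_nonneg_left (p6 j) ha) (mul_le_mul_of_nonneg_left (q6 j) hb2)
      · intro j
        rw [Finset.sum_add_distrib, ← Finset.mul_sum, ← Finset.mul_sum]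
        exact add_le_add (mul_le_mul_of_nonneg_left (p7 j) ha) (mul_le_mul_of_nonneg_left (q7 j) hb2)
      · intro j; linear_combination a * p8 j + b2 * q8 j + hab
      · rw [Finset.sum_add_distrib, ← Finset.mul_sum, ← Finset.mul_sum]
        linear_combination a * p9 + b2 * q9 + hab
  · classical
    rintro ⟨t, s, r, p⟩ hmem
    simp only [Set.mem_setOf_eq] at hmem
    obtain ⟨ht0, hs0, hr0, hp0, hsum1, hst, htail, htr, hsp⟩ := hmem
    -- cumulative sums of s
    set c : ℕ → ℝ := fun n => ∑ ℓ ∈ Finset.univ.filter (fun ℓ : Fin J => (ℓ : ℕ) < n), s ℓ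
      with hc
    have hc0 : c 0 = 0 := by simp [hc]
    have hcmono : ∀ {n n' : ℕ}, n ≤ n' → c n ≤ c n' := by
      intro n n' h
      apply Finset.sum_le_sum_of_subset_of_nonneg
      · intro ℓ hℓ
        simp only [Finset.mem_filter, Finset.mem_univ, true_and] at hℓ ⊢
        omega
      · intro ℓ _ _; exact hs0 ℓ
    have hcJ : c J = ∑ j, s j := by
      simp only [hc]
      apply Finset.sum_congr _ (fun _ _ => rfl)
      ext ℓ; simp [ℓ.isLt]
    have hcsucc : ∀ j : Fin J, c ((j : ℕ) + 1) = c (j : ℕ) + s j := by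
      intro j
      have hins : Finset.univ.filter (fun ℓ : Fin J => (ℓ : ℕ) < (j : ℕ) + 1)
          = insert j (Finset.univ.filter (fun ℓ : Fin J => (ℓ : ℕ) < (j : ℕ))) := by
        ext ℓ
        simp only [Finset.mem_filter, Finset.mem_univ, true_and, Finset.mem_insert, Fin.ext_iff]
        omega
      simp only [hc]
      rw [hins, Finset.sum_insert (by simp)]
      ring
    have hcnonneg : ∀ n, 0 ≤ c n := fun n => Finset.sum_nonneg fun ℓ _ => hs0 ℓ
    have hcle : ∀ n, c n ≤ c J := by
      intro n
      rcases le_or_gt n J with h | h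
      · exact hcmono h
      · have : c n = c J := by
          simp only [hc]
          apply Finset.sum_congr _ (fun _ _ => rfl)
          ext ℓ; simp only [Finset.mem_filter, Finset.mem_univ, true_and]
          have := ℓ.isLt; omega
        rw [this]
    have htailsum : ∀ j : Fin J, ∑ ℓ ∈ Finset.univ.filter (fun ℓ : Fin J => j ≤ ℓ), s ℓ
        = c J - c (j : ℕ) := by
      intro j
      have hsplit := Finset.sum_filter_add_sum_filter_not Finset.univ (fun ℓ : Fin J => j ≤ ℓ) s
      have h2 : Finset.univ.filter (fun ℓ : Fin J => ¬ j ≤ ℓ)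
          = Finset.univ.filter (fun ℓ : Fin J => (ℓ : ℕ) < (j : ℕ)) := by
        ext ℓ
        simp only [Finset.mem_filter, Finset.mem_univ, true_and, not_le, Fin.lt_def]
      rw [h2] at hsplit
      rw [hcJ, hc]
      linarith [hsplit]
    have htailc : ∀ j : Fin J, c (j : ℕ) + t j ≤ c J := by
      intro j
      have := htail j
      rw [htailsum j] at this
      linarith
    -- breakpoints
    set B : Finset ℝ := {1} ∪ (Finset.range (J + 1)).image c
        ∪ Finset.univ.image (fun j : Fin J => c (j : ℕ) + t j) with hB
    set L : List ℝ := B.sort (· ≤ ·) with hL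
    set b : ℕ → ℝ := fun i => L.getD i 0 with hb
    set m : ℕ := L.length - 1 with hm
    have h1B : (1 : ℝ) ∈ B := by simp [hB]
    have hcB : ∀ n, n ≤ J → c n ∈ B := by
      intro n hn
      simp only [hB, Finset.mem_union, Finset.mem_image, Finset.mem_range]
      exact Or.inl (Or.inr ⟨n, by omega, rfl⟩)
    have htB : ∀ j : Fin J, c (j : ℕ) + t j ∈ B := by
      intro j
      simp only [hB, Finset.mem_union, Finset.mem_image]
      exact Or.inr ⟨j, Finset.mem_univ j, rfl⟩
    have hB01 : ∀ x ∈ B, 0 ≤ x ∧ x ≤ 1 := by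
      intro x hx
      simp only [hB, Finset.mem_union, Finset.mem_image, Finset.mem_range,
        Finset.mem_singleton] at hx
      rcases hx with (hx | ⟨n, hn, rfl⟩) | ⟨j, _, rfl⟩
      · rw [hx]; norm_num
      · refine ⟨hcnonneg n, ?_⟩
        have := hcle n; rw [hcJ] at this; linarith
      · refine ⟨add_nonneg (hcnonneg _) (ht0 j), ?_⟩
        have := htailc j; rw [hcJ] at this; linarith
    have hlenpos : 0 < L.length := List.length_pos_iff.2 (List.ne_nil_of_mem ((Finset.mem_sort _).2 h1B))
    have hlen : L.length = m + 1 := by omega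
    have hmono : ∀ i j, i < j → j ≤ m → b i < b j := by
      intro i j hij hj
      have hj' : j < L.length := by omega
      have hi' : i < L.length := by omega
      simp only [hb, List.getD_eq_getElem _ _ hi', List.getD_eq_getElem _ _ hj']
      exact List.pairwise_iff_getElem.1 (List.sortedLT_iff_pairwise.1 B.sortedLT_sort) i j hi' hj' hij
    have hidx : ∀ x ∈ B, ∃ i, i ≤ m ∧ b i = x := by
      intro x hx
      have hxL : x ∈ L := by rw [hL]; exact (Finset.mem_sort (α := ℝ) (· ≤ ·)).2 hx
      obtain ⟨i, hi, hgi⟩ := List.mem_iff_getElem.1 hxL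
      exact ⟨i, by omega, by simp [hb, List.getD, List.getElem?_eq_getElem hi, hgi]⟩
    have hbB : ∀ i, i ≤ m → b i ∈ B := by
      intro i hi
      have hi' : i < L.length := by omega
      simp only [hb, List.getD_eq_getElem _ _ hi']
      exact (Finset.mem_sort _).1 (List.getElem_mem hi')
    have hb0 : b 0 = 0 := by
      obtain ⟨i, him, hbi⟩ := hidx 0 (hc0 ▸ hcB 0 (by omega))
      have hle : b 0 ≤ b i := by
        rcases Nat.eq_zero_or_pos i with h | h
        · rw [h]
        · exact le_of_lt (hmono 0 i h him)
      have h0 : 0 ≤ b 0 := (hB01 _ (hbB 0 (by omega))).1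
      rw [hbi] at hle
      linarith
    have hbm : b m = 1 := by
      obtain ⟨i, him, hbi⟩ := hidx 1 h1B
      have hle : b i ≤ b m := by
        rcases eq_or_lt_of_le him with h | h
        · rw [h]
        · exact le_of_lt (hmono i m h (le_refl m))
      have h1 : b m ≤ 1 := (hB01 _ (hbB m (le_refl m))).2
      rw [hbi] at hle
      linarith
    have hW : ∑ i ∈ Finset.range m, (b (i + 1) - b i) = 1 := by
      rw [Finset.sum_range_sub b m, hbm, hb0]; ring
    have hkey : ∀ a a' : ℝ, a ∈ B → a' ∈ B → a ≤ a' →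
        ∑ i ∈ Finset.range m, (b (i + 1) - b i) * (if a ≤ b i ∧ b i < a' then 1 else 0)
          = a' - a := by
      intro a a' ha ha' haa
      obtain ⟨i₁, hi₁, hb1⟩ := hidx a ha
      obtain ⟨i₂, hi₂, hb2⟩ := hidx a' ha'
      have h12 : i₁ ≤ i₂ := by
        by_contra h
        have := hmono i₂ i₁ (by omega) hi₁
        rw [hb1, hb2] at this
        linarith
      exact interval_sum_aux b m i₁ i₂ h12 hi₂ hmono a a' hb1.symm hb2.symm
    set zz : ℝ → (Fin J → ℝ) × (Fin J → ℝ) × (Fin J → ℝ) × ℝ := fun u =>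
      (fun j => if c (j : ℕ) ≤ u ∧ u < c (j : ℕ) + t j then 1 else 0,
       fun j => if c (j : ℕ) ≤ u ∧ u < c ((j : ℕ) + 1) then 1 else 0,
       fun j => 1 - (if c (j : ℕ) ≤ u ∧ u < c (j : ℕ) + t j then 1 else 0),
       1 - ∑ j : Fin J, (if c (j : ℕ) ≤ u ∧ u < c ((j : ℕ) + 1) then (1 : ℝ) else 0)) with hzz
    have hSsum : ∀ u : ℝ,
        (∑ j : Fin J, (if c (j : ℕ) ≤ u ∧ u < c ((j : ℕ) + 1) then (1 : ℝ) else 0))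
          = if 0 ≤ u ∧ u < c J then 1 else 0 := by
      intro u
      have key : ∀ n, n ≤ J →
          (∑ j ∈ Finset.univ.filter (fun j : Fin J => (j : ℕ) < n),
            (if c (j : ℕ) ≤ u ∧ u < c ((j : ℕ) + 1) then (1 : ℝ) else 0))
          = if 0 ≤ u ∧ u < c n then 1 else 0 := by
        intro n
        induction n with
        | zero =>
          intro _
          rw [show Finset.univ.filter (fun j : Fin J => (j : ℕ) < 0) = (∅ : Finset (Fin J)) by
            ext j; simp]
          rw [Finset.sum_empty, hc0, if_neg (by rintro ⟨h1, h2⟩; linarith)]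
        | succ n ih =>
          intro hn
          have hnJ : n < J := hn
          have hfil : Finset.univ.filter (fun j : Fin J => (j : ℕ) < n + 1)
              = insert (⟨n, hnJ⟩ : Fin J) (Finset.univ.filter (fun j : Fin J => (j : ℕ) < n)) := by
            ext ℓ
            simp only [Finset.mem_filter, Finset.mem_univ, true_and, Finset.mem_insert, Fin.ext_iff]
            omega
          rw [hfil, Finset.sum_insert (by simp), ih (by omega)]
          simp only [Fin.val_mk]
          have h0n : 0 ≤ c n := hcnonneg n
          have hc1 : c n ≤ c (n + 1) := hcmono (Nat.le_succ n)
          rcases lt_or_ge u (c n) with hA | hA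
          · rw [if_neg (by rintro ⟨h1, h2⟩; exact absurd h1 (not_le.2 hA)), zero_add]
            exact if_congr ⟨fun h => ⟨h.1, by linarith⟩, fun h => ⟨h.1, hA⟩⟩ rfl rfl
          · rw [if_neg (show ¬(0 ≤ u ∧ u < c n) by rintro ⟨h1, h2⟩; linarith), add_zero]
            exact if_congr ⟨fun h => ⟨by linarith, h.2⟩, fun h => ⟨hA, h.2⟩⟩ rfl rfl
      have := key J (le_refl J)
      rwa [show Finset.univ.filter (fun j : Fin J => (j : ℕ) < J) = Finset.univ by
        ext j; simp [j.isLt]] at this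
    have hzH : ∀ u : ℝ, zz u ∈
        {x : (Fin J → ℝ) × (Fin J → ℝ) × (Fin J → ℝ) × ℝ |
          (∀ j, x.1 j = 0 ∨ x.1 j = 1) ∧ (∀ j, x.2.1 j = 0 ∨ x.2.1 j = 1) ∧
          (∑ j, x.2.1 j) ≤ 1 ∧
          (∀ j, x.2.1 j ≤ x.1 j) ∧
          (∀ j ℓ : Fin J, ℓ < j → x.1 j + x.2.1 ℓ ≤ 1) ∧
          (∀ j : Fin J, x.1 j ≤ ∑ ℓ, x.2.1 ℓ) ∧
          (∀ j, x.1 j + x.2.2.1 j = 1) ∧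
          (∑ j, x.2.1 j) + x.2.2.2 = 1} := by
      intro u
      simp only [Set.mem_setOf_eq, hzz]
      refine ⟨?_, ?_, ?_, ?_, ?_, ?_, ?_, ?_⟩
      · intro j; split_ifs <;> simp
      · intro j; split_ifs <;> simp
      · rw [hSsum u]; split_ifs <;> norm_num
      · intro j
        by_cases h1 : c (j : ℕ) ≤ u ∧ u < c ((j : ℕ) + 1)
        · rw [if_pos h1, if_pos ⟨h1.1, by have := hcsucc j; have := hst j; linarith [h1.2]⟩]
        · rw [if_neg h1]; split_ifs <;> norm_num
      · intro j ℓ hℓ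
        by_cases h1 : c (j : ℕ) ≤ u ∧ u < c (j : ℕ) + t j
        · rw [if_pos h1, if_neg ?_]
          · norm_num
          · rintro ⟨h2, h3⟩
            have hle : ((ℓ : ℕ) + 1) ≤ (j : ℕ) := hℓ
            have := hcmono hle
            linarith [h1.1]
        · rw [if_neg h1]
          split_ifs <;> norm_num
      · intro j
        rw [hSsum u]
        by_cases h1 : c (j : ℕ) ≤ u ∧ u < c (j : ℕ) + t j
        · rw [if_pos h1,
            if_pos ⟨by linarith [hcnonneg (j : ℕ), h1.1], by linarith [htailc j, h1.2]⟩]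
        · rw [if_neg h1]; split_ifs <;> norm_num
      · intro j; ring
      · ring
    have hT : ∀ j : Fin J,
        ∑ i ∈ Finset.range m, (b (i + 1) - b i) *
          (if c (j : ℕ) ≤ b i ∧ b i < c (j : ℕ) + t j then (1 : ℝ) else 0) = t j := by
      intro j
      have h1 := hkey (c (j : ℕ)) (c (j : ℕ) + t j) (hcB _ (le_of_lt j.isLt)) (htB j)
        (by linarith [ht0 j])
      linarith [h1]
    have hS : ∀ j : Fin J,
        ∑ i ∈ Finset.range m, (b (i + 1) - b i) *
          (if c (j : ℕ) ≤ b i ∧ b i < c ((j : ℕ) + 1) then (1 : ℝ) else 0) = s j := by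
      intro j
      have h1 := hkey (c (j : ℕ)) (c ((j : ℕ) + 1)) (hcB _ (le_of_lt j.isLt))
        (hcB _ (by have := j.isLt; omega)) (hcmono (Nat.le_succ _))
      linarith [h1, hcsucc j]
    have hP : ∑ i ∈ Finset.range m, (b (i + 1) - b i) *
        (if 0 ≤ b i ∧ b i < c J then (1 : ℝ) else 0) = c J := by
      have h1 := hkey 0 (c J) (hc0 ▸ hcB 0 (by omega)) (hcB J (le_refl J)) (hcnonneg J)
      linarith [h1]
    have hw0 : ∀ i ∈ Finset.range m, 0 ≤ b (i + 1) - b i := by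
      intro i hi
      simp only [Finset.mem_range] at hi
      have := hmono i (i + 1) (by omega) (by omega)
      linarith
    have hcm := Finset.centerMass_mem_convexHull (Finset.range m) hw0
      (by rw [hW]; norm_num) (fun i _ => hzH (b i))
    rw [Finset.centerMass_eq_of_sum_1 _ _ hW] at hcm
    have hfinal : ((t, s, r, p) : (Fin J → ℝ) × (Fin J → ℝ) × (Fin J → ℝ) × ℝ)
        = ∑ i ∈ Finset.range m, (b (i + 1) - b i) • zz (b i) := by
      symm
      refine Prod.ext ?_ (Prod.ext ?_ (Prod.ext ?_ ?_))
      · funext j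
        simp only [Prod.fst_sum, Prod.smul_fst, Finset.sum_apply, Pi.smul_apply, smul_eq_mul, hzz]
        exact hT j
      · funext j
        simp only [Prod.snd_sum, Prod.fst_sum, Prod.smul_snd, Prod.smul_fst, Finset.sum_apply,
          Pi.smul_apply, smul_eq_mul, hzz]
        exact hS j
      · funext j
        simp only [Prod.snd_sum, Prod.fst_sum, Prod.smul_snd, Prod.smul_fst, Finset.sum_apply,
          Pi.smul_apply, smul_eq_mul, hzz]
        have e : ∀ i, (b (i + 1) - b i) *
              (1 - (if c (j : ℕ) ≤ b i ∧ b i < c (j : ℕ) + t j then (1 : ℝ) else 0))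
            = (b (i + 1) - b i) - (b (i + 1) - b i) *
              (if c (j : ℕ) ≤ b i ∧ b i < c (j : ℕ) + t j then (1 : ℝ) else 0) := fun i => by
          ring
        rw [Finset.sum_congr rfl fun i _ => e i, Finset.sum_sub_distrib, hW, hT j]
        linarith [htr j]
      · simp only [Prod.snd_sum, Prod.smul_snd, smul_eq_mul, hzz]
        have e : ∀ i ∈ Finset.range m, (b (i + 1) - b i) *
              (1 - ∑ j : Fin J, (if c (j : ℕ) ≤ b i ∧ b i < c ((j : ℕ) + 1) then (1 : ℝ) else 0))
            = (b (i + 1) - b i) - (b (i + 1) - b i) *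
              (if 0 ≤ b i ∧ b i < c J then (1 : ℝ) else 0) := by
          intro i _
          rw [hSsum (b i)]
          ring
        rw [Finset.sum_congr rfl e, Finset.sum_sub_distrib, hW, hP]
        linarith [hsp, hcJ]
    rw [hfinal]
    exact hcm
end

section
/- Consider the integer program: minimize Σ_{j=1}^J [(c_x − c_e) x_j − c_e Σ_{i : j ∈ P_i} z_{ij}] subject to x_j + Σ_{i : j ∈ P_i} z_{ij} ≥ b_j for all j ∈ [J], Σ_{j ∈ P_i} z_{ij} ≤ y_i for all i ∈ [I], with x_j, z_{ij} ∈ ℤ_{≥0}, where all b_j, y_i are integers. The constraint matrix of this program (after multiplying the second family of constraints by −1) is totally unimodular; consequently, the optimal value of the integer program equals the optimal value of its continuous (LP) relaxation. -/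
open scoped Classical

/-- Columns with at most one nonzero, or exactly two canceling nonzeros. -/
def GoodCol {k : ℕ} (col : Fin k → ℝ) : Prop :=
  (∃ r0, ∀ r, r ≠ r0 → col r = 0) ∨
  (∃ r1 r2, r1 ≠ r2 ∧ col r1 + col r2 = 0 ∧ ∀ r, r ≠ r1 → r ≠ r2 → col r = 0)

theorem det_good : ∀ (k : ℕ) (A : Matrix (Fin k) (Fin k) ℝ),
    (∀ r c, A r c ∈ ({-1, 0, 1} : Set ℝ)) →
    (∀ c, GoodCol (fun r => A r c)) →
    A.det ∈ ({-1, 0, 1} : Set ℝ) := by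
  intro k
  induction k with
  | zero =>
    intro A _ _
    simp [Matrix.det_fin_zero]
  | succ n ih =>
    intro A hent hcol
    by_cases hall : ∀ c, ∑ r, A r c = 0
    · -- determinant is zero: transpose kills the all-ones vector
      have hdet : A.transpose.det = 0 := by
        rw [← Matrix.exists_mulVec_eq_zero_iff]
        refine ⟨fun _ => 1, ?_, ?_⟩
        · intro h
          have := congrFun h 0
          simp at this
        · funext c
          simp [Matrix.mulVec, Matrix.transpose, dotProduct, hall c]
      rw [Set.mem_insert_iff, Set.mem_insert_iff]
      right; left
      rw [← Matrix.det_transpose]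
      exact hdet
    · push_neg at hall
      obtain ⟨c, hc⟩ := hall
      -- the column c must have a unique nonzero entry r0
      have hcase : ∃ r0, (∀ r, r ≠ r0 → A r c = 0) := by
        rcases hcol c with h1 | ⟨r1, r2, hne, hsum, hzero⟩
        · exact h1
        · exfalso
          apply hc
          have : ∑ r, A r c = A r1 c + A r2 c := by
            rw [← Finset.add_sum_erase _ _ (Finset.mem_univ r1),
                ← Finset.add_sum_erase _ _
                  (Finset.mem_erase.mpr ⟨Ne.symm hne, Finset.mem_univ r2⟩)]
            have : ∑ x ∈ ((Finset.univ.erase r1).erase r2), A x c = 0 := by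
              apply Finset.sum_eq_zero
              intro r hr
              exact hzero r (Finset.ne_of_mem_erase (Finset.mem_of_mem_erase hr))
                (Finset.ne_of_mem_erase hr)
            rw [this]; ring
          rw [this, hsum]
      obtain ⟨r0, hr0⟩ := hcase
      have hsum0 : ∑ r, A r c = A r0 c := by
        apply Finset.sum_eq_single_of_mem _ (Finset.mem_univ r0)
        intro r _ hr; exact hr0 r hr
      have hA0 : A r0 c ≠ 0 := by rw [← hsum0]; exact hc
      have hApm : A r0 c = 1 ∨ A r0 c = -1 := by
        rcases hent r0 c with h | h | h
        · right; exact h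
        · exact absurd h hA0
        · left; exact h
      -- expand along column c
      have hexp : A.det = (-1) ^ ((r0 : ℕ) + (c : ℕ)) * A r0 c *
          (A.submatrix r0.succAbove c.succAbove).det := by
        rw [Matrix.det_succ_column A c]
        rw [Finset.sum_eq_single_of_mem r0 (Finset.mem_univ r0)]
        intro r _ hr
        rw [hr0 r hr]; ring
      -- the minor is good
      have hminor : (A.submatrix r0.succAbove c.succAbove).det ∈ ({-1,0,1} : Set ℝ) := by
        apply ih
        · intro r c'; exact hent _ _
        · intro c'
          have inj : Function.Injective (Fin.succAbove r0) := Fin.succAbove_right_injective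
          have hne0 : ∀ r : Fin n, r0.succAbove r ≠ r0 := fun r => Fin.succAbove_ne r0 r
          rcases hcol (c.succAbove c') with ⟨s0, hs0⟩ | ⟨s1, s2, hne, hsum, hzero⟩
          · by_cases hs : s0 = r0
            · left
              refine ⟨c', fun r _ => ?_⟩
              exact hs0 _ (by rw [hs]; exact hne0 r)
            · obtain ⟨s0', hs0'⟩ := Fin.exists_succAbove_eq
                (show s0 ≠ r0 from hs)
              left
              refine ⟨s0', fun r hr => ?_⟩
              apply hs0
              rw [← hs0']
              exact fun h => hr (inj h)
          · by_cases h1 : s1 = r0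
            · have h2 : s2 ≠ r0 := fun h => hne (h1.trans h.symm)
              obtain ⟨s2', hs2'⟩ := Fin.exists_succAbove_eq h2
              left
              refine ⟨s2', fun r hr => ?_⟩
              apply hzero
              · rw [h1]; exact hne0 r
              · rw [← hs2']
                exact fun h => hr (inj h)
            · by_cases h2 : s2 = r0
              · obtain ⟨s1', hs1'⟩ := Fin.exists_succAbove_eq h1
                left
                refine ⟨s1', fun r hr => ?_⟩
                apply hzero
                · rw [← hs1']
                  exact fun h => hr (inj h)
                · rw [h2]; exact hne0 r
              · obtain ⟨s1', hs1'⟩ := Fin.exists_succAbove_eq h1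
                obtain ⟨s2', hs2'⟩ := Fin.exists_succAbove_eq h2
                right
                refine ⟨s1', s2', ?_, ?_, ?_⟩
                · intro h; apply hne; rw [← hs1', ← hs2', h]
                · simpa [Matrix.submatrix, hs1', hs2'] using hsum
                · intro r hr1 hr2
                  apply hzero
                  · rw [← hs1']
                    exact fun h => hr1 (inj h)
                  · rw [← hs2']
                    exact fun h => hr2 (inj h)
      -- conclude
      rw [hexp]
      rcases neg_one_pow_eq_or ℝ ((r0 : ℕ) + (c : ℕ)) with hp | hp <;>
        rcases hApm with ha | ha <;>
        rcases hminor with hm | hm | hm <;>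
        simp only [Set.mem_insert_iff, Set.mem_singleton_iff] at hm ⊢ <;>
        rw [hp, ha] <;> simp [hm]

lemma swap_sum_subset {M : Type*} [AddCommMonoid M] {I J : ℕ} (P : Fin I → Finset (Fin J))
    (S : Finset (Fin J)) (w : Fin I → Fin J → M) :
    ∑ j ∈ S, ∑ i ∈ Finset.univ.filter (fun i => j ∈ P i), w i j
      = ∑ i, ∑ j ∈ S ∩ P i, w i j := by
  have h1 : ∀ j, ∑ i ∈ Finset.univ.filter (fun i => j ∈ P i), w i j
      = ∑ i, if j ∈ P i then w i j else 0 := fun j => Finset.sum_filter _ _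
  have h2 : ∀ i, ∑ j ∈ S ∩ P i, w i j = ∑ j ∈ S, if j ∈ P i then w i j else 0 := by
    intro i
    have hSP : S ∩ P i = S.filter (fun j => j ∈ P i) := by
      ext j
      simp [Finset.mem_inter, Finset.mem_filter]
    rw [hSP, Finset.sum_filter]
  simp_rw [h1, h2]
  exact Finset.sum_comm
lemma swap_sum {M : Type*} [AddCommMonoid M] {I J : ℕ} (P : Fin I → Finset (Fin J))
    (w : Fin I → Fin J → M) :
    ∑ j, ∑ i ∈ Finset.univ.filter (fun i => j ∈ P i), w i j = ∑ i, ∑ j ∈ P i, w i j := by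
  have := swap_sum_subset P Finset.univ w
  simpa [Finset.univ_inter] using this

lemma hall_construct (I J : ℕ) (P : Fin I → Finset (Fin J)) (d : Fin J → ℕ) (yy : Fin I → ℕ)
    (t : ℕ)
    (ht : ∀ S : Finset (Fin J), ∑ j ∈ S, (d j : ℤ) ≤ (t : ℤ) +
      ∑ i ∈ Finset.univ.filter (fun i => ∃ j ∈ S, j ∈ P i), (yy i : ℤ)) :
    ∃ (z0 : Fin I → Fin J → ℕ) (dum : Fin J → ℕ),
      (∀ i j, j ∉ P i → z0 i j = 0) ∧
      (∀ i, ∑ j ∈ P i, z0 i j ≤ yy i) ∧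
      (∀ j, (d j : ℤ) = (∑ i ∈ Finset.univ.filter (fun i => j ∈ P i), (z0 i j : ℤ)) + dum j) ∧
      (∑ j, dum j ≤ t) := by
  set ι := (j : Fin J) × Fin (d j) with hι
  set α := ((i : Fin I) × Fin (yy i)) ⊕ Fin t with hα
  set A : ι → Finset α := fun u => Finset.univ.filter
    (fun a => Sum.elim (fun p => u.1 ∈ P p.1) (fun _ => True) a) with hA
  have hall : ∀ W : Finset ι, W.card ≤ (W.biUnion A).card := by
    intro W
    rcases W.eq_empty_or_nonempty with rfl | hW
    · simp
    set S := W.image Sigma.fst with hS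
    have h1 : W.card ≤ ∑ j ∈ S, d j := by
      have hsub : W ⊆ S.sigma (fun j => Finset.univ) := by
        intro u hu
        rw [Finset.mem_sigma]
        exact ⟨Finset.mem_image_of_mem _ hu, Finset.mem_univ _⟩
      calc W.card ≤ (S.sigma (fun j => Finset.univ)).card := Finset.card_le_card hsub
        _ = ∑ j ∈ S, d j := by rw [Finset.card_sigma]; simp
    have h2 : ((Finset.univ.filter (fun i => ∃ j ∈ S, j ∈ P i)).sigma
          (fun i => (Finset.univ : Finset (Fin (yy i))))).map
          ⟨Sum.inl, Sum.inl_injective⟩ ∪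
        (Finset.univ : Finset (Fin t)).map ⟨Sum.inr, Sum.inr_injective⟩ ⊆ W.biUnion A := by
      intro a ha
      rw [Finset.mem_union] at ha
      rcases ha with ha | ha
      · rw [Finset.mem_map] at ha
        obtain ⟨p, hp, rfl⟩ := ha
        rw [Finset.mem_sigma] at hp
        obtain ⟨hp1, -⟩ := hp
        rw [Finset.mem_filter] at hp1
        obtain ⟨-, j, hjS, hjP⟩ := hp1
        rw [hS, Finset.mem_image] at hjS
        obtain ⟨u, huW, hu1⟩ := hjS
        refine Finset.mem_biUnion.mpr ⟨u, huW, ?_⟩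
        rw [hA, Finset.mem_filter]
        exact ⟨Finset.mem_univ _, by simp [hu1, hjP]⟩
      · rw [Finset.mem_map] at ha
        obtain ⟨q, -, rfl⟩ := ha
        obtain ⟨u, huW⟩ := hW
        refine Finset.mem_biUnion.mpr ⟨u, huW, ?_⟩
        rw [hA, Finset.mem_filter]
        exact ⟨Finset.mem_univ _, by simp⟩
    have h3 : ∑ j ∈ S, d j ≤ (∑ i ∈ Finset.univ.filter (fun i => ∃ j ∈ S, j ∈ P i), yy i) + t := by
      have h := ht S
      zify
      linarith
    have h4 : (((Finset.univ.filter (fun i => ∃ j ∈ S, j ∈ P i)).sigma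
          (fun i => (Finset.univ : Finset (Fin (yy i))))).map
          ⟨Sum.inl, Sum.inl_injective⟩ ∪
        (Finset.univ : Finset (Fin t)).map ⟨Sum.inr, Sum.inr_injective⟩).card =
        (∑ i ∈ Finset.univ.filter (fun i => ∃ j ∈ S, j ∈ P i), yy i) + t := by
      rw [Finset.card_union_of_disjoint]
      · rw [Finset.card_map, Finset.card_map, Finset.card_sigma, Finset.card_univ]
        simp
      · rw [Finset.disjoint_left]
        rintro a ha hb
        rw [Finset.mem_map] at ha hb
        obtain ⟨p, -, rfl⟩ := ha
        obtain ⟨q, -, h⟩ := hb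
        simp at h
    calc W.card ≤ ∑ j ∈ S, d j := h1
      _ ≤ _ := h3
      _ = _ := h4.symm
      _ ≤ (W.biUnion A).card := Finset.card_le_card h2
  obtain ⟨F, hFinj, hFA⟩ := (Finset.all_card_le_biUnion_card_iff_exists_injective A).mp hall
  have hFA' : ∀ u : ι, Sum.elim (fun p => u.1 ∈ P p.1) (fun _ => True) (F u) :=
    fun u => (Finset.mem_filter.mp (hFA u)).2
  set z0 : Fin I → Fin J → ℕ := fun i j =>
    (Finset.univ.filter (fun k : Fin (d j) => ∃ l, F ⟨j, k⟩ = Sum.inl ⟨i, l⟩)).card with hz0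
  set dum : Fin J → ℕ := fun j =>
    (Finset.univ.filter (fun k : Fin (d j) => (F ⟨j, k⟩).isRight)).card with hdum
  refine ⟨z0, dum, ?_, ?_, ?_, ?_⟩
  · -- support
    intro i j hij
    rw [hz0]
    simp only []
    rw [Finset.card_eq_zero, Finset.eq_empty_iff_forall_notMem]
    intro k hk
    rw [Finset.mem_filter] at hk
    obtain ⟨-, l, hl⟩ := hk
    have := hFA' ⟨j, k⟩
    rw [hl] at this
    exact hij this
  · -- row sums
    intro i
    have hcard : ∑ j ∈ P i, z0 i j = ((P i).sigma (fun j =>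
        Finset.univ.filter (fun k : Fin (d j) => ∃ l, F ⟨j, k⟩ = Sum.inl ⟨i, l⟩))).card := by
      rw [Finset.card_sigma]
    rw [hcard]
    have : ((P i).sigma (fun j =>
        Finset.univ.filter (fun k : Fin (d j) => ∃ l, F ⟨j, k⟩ = Sum.inl ⟨i, l⟩))).card ≤
        (Finset.range (yy i)).card := by
      apply Finset.card_le_card_of_injOn
        (fun u => Sum.elim (fun p => (p.2 : ℕ)) (fun _ => 0) (F ⟨u.1, u.2⟩))
      · rintro ⟨j, k⟩ hu
        rw [Finset.mem_coe, Finset.mem_sigma, Finset.mem_filter] at hu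
        obtain ⟨-, -, l, hl⟩ := hu
        rw [Finset.mem_coe, Finset.mem_range]
        simp only [hl]
        exact l.isLt
      · rintro ⟨j, k⟩ hu ⟨j', k'⟩ hu' heq
        rw [Finset.mem_coe, Finset.mem_sigma, Finset.mem_filter] at hu hu'
        obtain ⟨-, -, l, hl⟩ := hu
        obtain ⟨-, -, l', hl'⟩ := hu'
        simp only [hl, hl'] at heq
        have : l = l' := Fin.ext heq
        subst this
        exact hFinj (hl.trans hl'.symm)
    simpa using this
  · -- column identity
    intro j
    have claim1 : ∑ i ∈ Finset.univ.filter (fun i => j ∈ P i), z0 i j =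
        (Finset.univ.filter (fun k : Fin (d j) => (F ⟨j, k⟩).isLeft)).card := by
      rw [← Finset.card_biUnion]
      · congr 1
        ext k
        simp only [Finset.mem_biUnion, Finset.mem_filter, Finset.mem_univ, true_and]
        constructor
        · rintro ⟨i, -, l, hl⟩
          rw [hl]; rfl
        · intro hleft
          rw [Sum.isLeft_iff] at hleft
          obtain ⟨p, hp⟩ := hleft
          refine ⟨p.1, ?_, p.2, by rw [hp]⟩
          have := hFA' ⟨j, k⟩
          rw [hp] at this
          exact this
      · rintro i - i' - hii'
        rw [Function.onFun, Finset.disjoint_left]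
        rintro k hk hk'
        rw [Finset.mem_filter] at hk hk'
        obtain ⟨-, l, hl⟩ := hk
        obtain ⟨-, l', hl'⟩ := hk'
        rw [hl] at hl'
        have := Sum.inl_injective hl'
        exact hii' (congrArg Sigma.fst this)
    have claim2 : (Finset.univ.filter (fun k : Fin (d j) => (F ⟨j, k⟩).isLeft)).card +
        (Finset.univ.filter (fun k : Fin (d j) => (F ⟨j, k⟩).isRight)).card = d j := by
      have h := Finset.card_filter_add_card_filter_not
        (s := (Finset.univ : Finset (Fin (d j)))) (p := fun k => (F ⟨j, k⟩).isLeft = true)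
      have heq : Finset.univ.filter (fun k : Fin (d j) => ¬((F ⟨j, k⟩).isLeft = true)) =
          Finset.univ.filter (fun k : Fin (d j) => (F ⟨j, k⟩).isRight) := by
        ext k
        simp [Sum.not_isLeft]
      rw [heq] at h
      rw [Finset.card_univ, Fintype.card_fin] at h
      exact h
    have claim3 : (∑ i ∈ Finset.univ.filter (fun i => j ∈ P i), z0 i j) + dum j = d j := by
      rw [claim1]
      exact claim2
    exact_mod_cast claim3.symm
  · -- total dummies
    have hcard : ∑ j, dum j = ((Finset.univ : Finset (Fin J)).sigma (fun j =>
        Finset.univ.filter (fun k : Fin (d j) => (F ⟨j, k⟩).isRight))).card := by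
      rw [Finset.card_sigma]
    rw [hcard]
    have : ((Finset.univ : Finset (Fin J)).sigma (fun j =>
        Finset.univ.filter (fun k : Fin (d j) => (F ⟨j, k⟩).isRight))).card ≤
        (Finset.range t).card := by
      apply Finset.card_le_card_of_injOn
        (fun u => Sum.elim (fun _ => 0) (fun q : Fin t => (q : ℕ)) (F ⟨u.1, u.2⟩))
      · rintro ⟨j, k⟩ hu
        rw [Finset.mem_coe, Finset.mem_sigma, Finset.mem_filter] at hu
        obtain ⟨-, -, hr⟩ := hu
        rw [Sum.isRight_iff] at hr
        obtain ⟨q, hq⟩ := hr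
        rw [Finset.mem_coe, Finset.mem_range]
        simp only [hq]
        exact q.isLt
      · rintro ⟨j, k⟩ hu ⟨j', k'⟩ hu' heq
        rw [Finset.mem_coe, Finset.mem_sigma, Finset.mem_filter] at hu hu'
        obtain ⟨-, -, hr⟩ := hu
        obtain ⟨-, -, hr'⟩ := hu'
        rw [Sum.isRight_iff] at hr hr'
        obtain ⟨q, hq⟩ := hr
        obtain ⟨q', hq'⟩ := hr'
        simp only [hq, hq'] at heq
        have : q = q' := Fin.ext heq
        subst this
        exact hFinj (hq.trans hq'.symm)
    simpa using this

lemma key (I J : ℕ) (P : Fin I → Finset (Fin J)) (b : Fin J → ℤ) (y : Fin I → ℤ)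
    (hy : ∀ i, 0 ≤ y i) :
    ∃ (xh : Fin J → ℕ) (zh : Fin I → Fin J → ℕ),
      (∀ i j, j ∉ P i → zh i j = 0) ∧
      (∀ j, b j ≤ (xh j : ℤ) + ∑ i ∈ Finset.univ.filter (fun i => j ∈ P i), (zh i j : ℤ)) ∧
      (∀ i, (∑ j ∈ P i, (zh i j : ℤ)) ≤ y i) ∧
      (∀ (cx ce : ℝ), 0 ≤ ce → ce ≤ cx →
      ∀ (x : Fin J → ℝ) (z : Fin I → Fin J → ℝ),
        (∀ j, 0 ≤ x j) → (∀ i j, 0 ≤ z i j) → (∀ i j, j ∉ P i → z i j = 0) →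
        (∀ j, (b j : ℝ) ≤ x j + ∑ i ∈ Finset.univ.filter (fun i => j ∈ P i), z i j) →
        (∀ i, (∑ j ∈ P i, z i j) ≤ (y i : ℝ)) →
        (∑ j, ((cx - ce) * (xh j : ℝ) -
            ce * ∑ i ∈ Finset.univ.filter (fun i => j ∈ P i), (zh i j : ℝ)))
          ≤ ∑ j, ((cx - ce) * x j -
            ce * ∑ i ∈ Finset.univ.filter (fun i => j ∈ P i), z i j)) := by
  set d : Fin J → ℕ := fun j => (b j).toNat with hd
  set yy : Fin I → ℕ := fun i => (y i).toNat with hyy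
  have hyyz : ∀ i, (yy i : ℤ) = y i := fun i => Int.toNat_of_nonneg (hy i)
  set adjS : Finset (Fin J) → Finset (Fin I) :=
    fun S => Finset.univ.filter (fun i => ∃ j ∈ S, j ∈ P i) with hadjS
  set t : ℕ := Finset.sup Finset.univ.powerset
    (fun S => ((∑ j ∈ S, (d j : ℤ)) - ∑ i ∈ adjS S, (yy i : ℤ)).toNat) with htdef
  have ht : ∀ S : Finset (Fin J), ∑ j ∈ S, (d j : ℤ) ≤ (t : ℤ) +
      ∑ i ∈ adjS S, (yy i : ℤ) := by
    intro S
    have h1 : ((∑ j ∈ S, (d j : ℤ)) - ∑ i ∈ adjS S, (yy i : ℤ)).toNat ≤ t :=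
      Finset.le_sup (f := fun S => ((∑ j ∈ S, (d j : ℤ)) - ∑ i ∈ adjS S, (yy i : ℤ)).toNat)
        (Finset.mem_powerset.mpr (Finset.subset_univ S))
    have h2 : (∑ j ∈ S, (d j : ℤ)) - ∑ i ∈ adjS S, (yy i : ℤ) ≤
        (((∑ j ∈ S, (d j : ℤ)) - ∑ i ∈ adjS S, (yy i : ℤ)).toNat : ℤ) :=
      Int.self_le_toNat _
    have h3 : ((((∑ j ∈ S, (d j : ℤ)) - ∑ i ∈ adjS S, (yy i : ℤ)).toNat : ℕ) : ℤ) ≤ (t : ℤ) :=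
      Int.ofNat_le.mpr h1
    linarith
  obtain ⟨z0, dum, hsupp0, hrow0, hcol0, hdumt⟩ := hall_construct I J P d yy t ht
  -- padding
  set zh : Fin I → Fin J → ℕ := fun i j => z0 i j +
    (if h : (P i).Nonempty then (if j = (P i).min' h then yy i - ∑ j' ∈ P i, z0 i j' else 0)
     else 0) with hzh
  have hsupph : ∀ i j, j ∉ P i → zh i j = 0 := by
    intro i j hij
    rw [hzh]
    simp only []
    rw [hsupp0 i j hij]
    split_ifs with h1 h2
    · exact absurd (h2 ▸ (P i).min'_mem h1) hij
    · rfl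
    · rfl
  have hrowh : ∀ i, (P i).Nonempty → ∑ j ∈ P i, zh i j = yy i := by
    intro i hne
    rw [hzh]
    simp only []
    rw [Finset.sum_add_distrib]
    have h1 : ∑ j ∈ P i, (if h : (P i).Nonempty then
        (if j = (P i).min' h then yy i - ∑ j' ∈ P i, z0 i j' else 0) else 0)
        = yy i - ∑ j' ∈ P i, z0 i j' := by
      simp only [dif_pos hne]
      rw [Finset.sum_ite_eq' (P i) ((P i).min' hne)]
      simp [(P i).min'_mem hne]
    rw [h1]
    exact Nat.add_sub_cancel' (hrow0 i)
  have hz0zh : ∀ i j, z0 i j ≤ zh i j := by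
    intro i j
    rw [hzh]
    simp only []
    exact Nat.le_add_right _ _
  -- column sums
  set Zh : Fin J → ℕ := fun j => ∑ i ∈ Finset.univ.filter (fun i => j ∈ P i), zh i j with hZh
  set xh : Fin J → ℕ := fun j => ((b j) - (Zh j : ℤ)).toNat with hxh
  have hxh_le : ∀ j, xh j ≤ dum j := by
    intro j
    rw [hxh]
    simp only []
    rw [Int.toNat_le]
    have h1 : b j ≤ (d j : ℤ) := Int.self_le_toNat _
    have h2 : (∑ i ∈ Finset.univ.filter (fun i => j ∈ P i), (z0 i j : ℤ)) ≤ (Zh j : ℤ) := by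
      rw [hZh]
      push_cast
      exact Finset.sum_le_sum (fun i _ => by exact_mod_cast hz0zh i j)
    have h3 := hcol0 j
    linarith
  refine ⟨xh, zh, hsupph, ?_, ?_, ?_⟩
  · intro j
    have : b j - (Zh j : ℤ) ≤ (xh j : ℤ) := Int.self_le_toNat _
    have hZ : (Zh j : ℤ) = ∑ i ∈ Finset.univ.filter (fun i => j ∈ P i), (zh i j : ℤ) := by
      rw [hZh]; push_cast; rfl
    linarith [hZ ▸ this]
  · intro i
    rcases (P i).eq_empty_or_nonempty with he | hne
    · rw [he]
      simp [hy i]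
    · have := hrowh i hne
      calc ∑ j ∈ P i, (zh i j : ℤ) = ((∑ j ∈ P i, zh i j : ℕ) : ℤ) := by push_cast; rfl
        _ = (yy i : ℤ) := by rw [this]
        _ ≤ y i := le_of_eq (hyyz i)
  · intro cx ce hce hcx x z hx hz hzsupp hcons hcap
    -- rewrite both sides
    have lhs_eq : (∑ j, ((cx - ce) * (xh j : ℝ) -
        ce * ∑ i ∈ Finset.univ.filter (fun i => j ∈ P i), (zh i j : ℝ)))
        = (cx - ce) * (∑ j, (xh j : ℝ)) - ce * (∑ j, (Zh j : ℝ)) := by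
      rw [Finset.sum_sub_distrib, ← Finset.mul_sum, ← Finset.mul_sum]
      congr 2
      apply Finset.sum_congr rfl
      intro j _
      rw [hZh]
      push_cast
      rfl
    have rhs_eq : (∑ j, ((cx - ce) * x j -
        ce * ∑ i ∈ Finset.univ.filter (fun i => j ∈ P i), z i j))
        = (cx - ce) * (∑ j, x j) -
          ce * (∑ j, ∑ i ∈ Finset.univ.filter (fun i => j ∈ P i), z i j) := by
      rw [Finset.sum_sub_distrib, ← Finset.mul_sum, ← Finset.mul_sum]
    rw [lhs_eq, rhs_eq]
    set Yn : ℝ := ∑ i, (if (P i).Nonempty then (yy i : ℝ) else 0) with hYn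
    -- (a)
    have ha : (∑ j, (xh j : ℝ)) ≤ (t : ℝ) := by
      have h1 : ∑ j, xh j ≤ ∑ j, dum j := Finset.sum_le_sum (fun j _ => hxh_le j)
      have h2 : ∑ j, xh j ≤ t := le_trans h1 hdumt
      calc (∑ j, (xh j : ℝ)) = ((∑ j, xh j : ℕ) : ℝ) := by push_cast; rfl
        _ ≤ (t : ℝ) := by exact_mod_cast h2
    -- (b)
    have hb : (∑ j, (Zh j : ℝ)) = Yn := by
      have h1 : (∑ j, (Zh j : ℝ)) = ∑ j, ∑ i ∈ Finset.univ.filter (fun i => j ∈ P i),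
          ((zh i j : ℝ)) := by
        apply Finset.sum_congr rfl
        intro j _
        rw [hZh]; push_cast; rfl
      rw [h1, swap_sum P (fun i j => (zh i j : ℝ)), hYn]
      apply Finset.sum_congr rfl
      intro i _
      split_ifs with hne
      · rw [← hrowh i hne]; push_cast; rfl
      · rw [Finset.not_nonempty_iff_eq_empty] at hne
        rw [hne]
        simp
    -- (c)
    have hc : (∑ j, ∑ i ∈ Finset.univ.filter (fun i => j ∈ P i), z i j) ≤ Yn := by
      rw [swap_sum P z, hYn]
      apply Finset.sum_le_sum
      intro i _
      split_ifs with hne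
      · calc ∑ j ∈ P i, z i j ≤ (y i : ℝ) := hcap i
          _ = (yy i : ℝ) := by rw [← hyyz i]; push_cast; rfl
      · rw [Finset.not_nonempty_iff_eq_empty] at hne
        rw [hne]
        simp
    -- (d)
    have hd2 : (t : ℝ) ≤ ∑ j, x j := by
      obtain ⟨S₀, -, hS₀⟩ := Finset.exists_mem_eq_sup Finset.univ.powerset
        ⟨∅, Finset.empty_mem_powerset _⟩
        (fun S => ((∑ j ∈ S, (d j : ℤ)) - ∑ i ∈ adjS S, (yy i : ℤ)).toNat)
      by_cases hpos : (0:ℤ) ≤ (∑ j ∈ S₀, (d j : ℤ)) - ∑ i ∈ adjS S₀, (yy i : ℤ)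
      · have htz : (t : ℤ) = (∑ j ∈ S₀, (d j : ℤ)) - ∑ i ∈ adjS S₀, (yy i : ℤ) := by
          rw [htdef, hS₀]
          exact Int.toNat_of_nonneg hpos
        have htr : (t : ℝ) = (∑ j ∈ S₀, ((d j : ℕ) : ℝ)) - ∑ i ∈ adjS S₀, ((yy i : ℕ) : ℝ) := by
          exact_mod_cast congrArg (fun n : ℤ => (n : ℝ)) htz
        -- Σ_{j∈S₀} Zr j ≤ Σ_{adj} yy
        have hZS : ∑ j ∈ S₀, (∑ i ∈ Finset.univ.filter (fun i => j ∈ P i), z i j)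
            ≤ ∑ i ∈ adjS S₀, ((yy i : ℕ) : ℝ) := by
          rw [swap_sum_subset P S₀ z]
          have : ∑ i ∈ adjS S₀, ((yy i : ℕ) : ℝ) =
              ∑ i, (if i ∈ adjS S₀ then ((yy i : ℕ) : ℝ) else 0) := by
            rw [Finset.sum_ite_mem]
            simp [Finset.univ_inter]
          rw [this]
          apply Finset.sum_le_sum
          intro i _
          split_ifs with hmem
          · calc ∑ j ∈ S₀ ∩ P i, z i j ≤ ∑ j ∈ P i, z i j := by
                  apply Finset.sum_le_sum_of_subset_of_nonneg (Finset.inter_subset_right)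
                  intro j _ _
                  exact hz i j
              _ ≤ (y i : ℝ) := hcap i
              _ = ((yy i : ℕ) : ℝ) := by rw [← hyyz i]; push_cast; rfl
          · have : S₀ ∩ P i = ∅ := by
              rw [Finset.eq_empty_iff_forall_notMem]
              intro j hj
              rw [Finset.mem_inter] at hj
              apply hmem
              rw [hadjS, Finset.mem_filter]
              exact ⟨Finset.mem_univ _, j, hj.1, hj.2⟩
            rw [this]
            simp
        -- d j ≤ x j + Zr j
        have hdx : ∀ j, ((d j : ℕ) : ℝ) ≤ x j +
            ∑ i ∈ Finset.univ.filter (fun i => j ∈ P i), z i j := by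
          intro j
          have hZnn : 0 ≤ ∑ i ∈ Finset.univ.filter (fun i => j ∈ P i), z i j :=
            Finset.sum_nonneg (fun i _ => hz i j)
          rcases le_or_gt 0 (b j) with hbj | hbj
          · have : ((d j : ℕ) : ℝ) = ((b j : ℤ) : ℝ) := by
              rw [hd]
              exact_mod_cast congrArg (fun n : ℤ => (n : ℝ)) (Int.toNat_of_nonneg hbj)
            rw [this]
            exact hcons j
          · have : (d j : ℕ) = 0 := by
              rw [hd]
              simp only []
              omega
            rw [this]
            push_cast
            linarith [hx j]
        calc (t : ℝ) = (∑ j ∈ S₀, ((d j : ℕ) : ℝ)) - ∑ i ∈ adjS S₀, ((yy i : ℕ) : ℝ) := htr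
          _ ≤ (∑ j ∈ S₀, (x j + ∑ i ∈ Finset.univ.filter (fun i => j ∈ P i), z i j))
              - ∑ i ∈ adjS S₀, ((yy i : ℕ) : ℝ) := by
            have := Finset.sum_le_sum (fun j (_ : j ∈ S₀) => hdx j)
            linarith
          _ = (∑ j ∈ S₀, x j) + (∑ j ∈ S₀, ∑ i ∈ Finset.univ.filter (fun i => j ∈ P i), z i j)
              - ∑ i ∈ adjS S₀, ((yy i : ℕ) : ℝ) := by rw [Finset.sum_add_distrib]
          _ ≤ ∑ j ∈ S₀, x j := by linarith [hZS]
          _ ≤ ∑ j, x j := by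
            apply Finset.sum_le_sum_of_subset_of_nonneg (Finset.subset_univ S₀)
            intro j _ _
            exact hx j
      · have ht0 : t = 0 := by
          rw [htdef, hS₀]
          omega
        rw [ht0]
        simp only [Nat.cast_zero]
        exact Finset.sum_nonneg (fun j _ => hx j)
    -- combine
    have h1 : (cx - ce) * (∑ j, (xh j : ℝ)) ≤ (cx - ce) * (∑ j, x j) :=
      mul_le_mul_of_nonneg_left (le_trans ha hd2) (by linarith)
    have h2 : ce * (∑ j, ∑ i ∈ Finset.univ.filter (fun i => j ∈ P i), z i j) ≤
        ce * (∑ j, (Zh j : ℝ)) := by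
      rw [hb]
      exact mul_le_mul_of_nonneg_left hc hce
    linarith

/-- the constraint matrix of the staffing integer program is totally
unimodular, and consequently the optimal value of the integer program equals the
optimal value of its continuous (LP) relaxation. -/
theorem staffing_matrix_TU_and_IP_eq_LP
    (I J : ℕ) (P : Fin I → Finset (Fin J)) (b : Fin J → ℤ) (y : Fin I → ℤ)
    (cx ce : ℝ) (hce : 0 ≤ ce) (hcx : ce ≤ cx) :
    -- total unimodularity of the constraint matrix
    (∀ (k : ℕ) (ri : Fin k → Fin J ⊕ Fin I) (ci : Fin k → Fin J ⊕ (Fin I × Fin J)),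
      Function.Injective ri → Function.Injective ci →
      (Matrix.submatrix
        (fun (r : Fin J ⊕ Fin I) (c : Fin J ⊕ (Fin I × Fin J)) =>
          match r, c with
          | Sum.inl j, Sum.inl j' => if j' = j then (1 : ℝ) else 0
          | Sum.inl j, Sum.inr (i, j') => if j' = j ∧ j ∈ P i then (1 : ℝ) else 0
          | Sum.inr _, Sum.inl _ => (0 : ℝ)
          | Sum.inr i, Sum.inr (i', j) => if i' = i ∧ j ∈ P i then (-1 : ℝ) else 0)
        ri ci).det ∈ ({-1, 0, 1} : Set ℝ)) ∧
    -- the integer program and its LP relaxation have the same optimal value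
    sInf {v : ℝ | ∃ (x : Fin J → ℕ) (z : Fin I → Fin J → ℕ),
        (∀ i j, j ∉ P i → z i j = 0) ∧
        (∀ j : Fin J, b j ≤ (x j : ℤ) +
          ∑ i ∈ Finset.univ.filter (fun i => j ∈ P i), (z i j : ℤ)) ∧
        (∀ i : Fin I, (∑ j ∈ P i, (z i j : ℤ)) ≤ y i) ∧
        v = ∑ j, ((cx - ce) * (x j : ℝ) -
          ce * ∑ i ∈ Finset.univ.filter (fun i => j ∈ P i), (z i j : ℝ))}
    = sInf {v : ℝ | ∃ (x : Fin J → ℝ) (z : Fin I → Fin J → ℝ),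
        (∀ j, 0 ≤ x j) ∧ (∀ i j, 0 ≤ z i j) ∧
        (∀ i j, j ∉ P i → z i j = 0) ∧
        (∀ j : Fin J, (b j : ℝ) ≤ x j +
          ∑ i ∈ Finset.univ.filter (fun i => j ∈ P i), z i j) ∧
        (∀ i : Fin I, (∑ j ∈ P i, z i j) ≤ (y i : ℝ)) ∧
        v = ∑ j, ((cx - ce) * x j -
          ce * ∑ i ∈ Finset.univ.filter (fun i => j ∈ P i), z i j)} := by
  constructor
  · -- total unimodularity
    intro k ri ci hri hci
    set M : Matrix (Fin J ⊕ Fin I) (Fin J ⊕ (Fin I × Fin J)) ℝ :=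
      (fun (r : Fin J ⊕ Fin I) (c : Fin J ⊕ (Fin I × Fin J)) =>
        match r, c with
        | Sum.inl j, Sum.inl j' => if j' = j then (1 : ℝ) else 0
        | Sum.inl j, Sum.inr (i, j') => if j' = j ∧ j ∈ P i then (1 : ℝ) else 0
        | Sum.inr _, Sum.inl _ => (0 : ℝ)
        | Sum.inr i, Sum.inr (i', j) => if i' = i ∧ j ∈ P i then (-1 : ℝ) else 0) with hM
    have e1 : ∀ (u : Fin J ⊕ Fin I) (j' : Fin J), u ≠ Sum.inl j' → M u (Sum.inl j') = 0 := by
      intro u j' hu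
      rcases u with j₂ | i₂
      · have : j' ≠ j₂ := fun h => hu (by rw [h])
        simp [hM, this]
      · simp [hM]
    have e2 : ∀ (u : Fin J ⊕ Fin I) (i : Fin I) (j : Fin J),
        u ≠ Sum.inl j → u ≠ Sum.inr i → M u (Sum.inr (i, j)) = 0 := by
      intro u i j h1 h2
      rcases u with j₂ | i₂
      · have : j ≠ j₂ := fun h => h1 (by rw [h])
        simp [hM, this]
      · have : i ≠ i₂ := fun h => h2 (by rw [h])
        simp [hM, this]
    have e3 : ∀ (u : Fin J ⊕ Fin I) (i : Fin I) (j : Fin J),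
        j ∉ P i → M u (Sum.inr (i, j)) = 0 := by
      intro u i j hp
      rcases u with j₂ | i₂
      · by_cases h : j = j₂
        · subst h; simp [hM, hp]
        · simp [hM, h]
      · by_cases h : i = i₂
        · subst h; simp [hM, hp]
        · simp [hM, h]
    apply det_good
    · intro r c
      simp only [Matrix.submatrix_apply]
      rcases ri r with j₂ | i₂ <;> rcases ci c with j' | ⟨i, j⟩ <;>
        simp only [hM] <;> first | (split_ifs <;> simp) | simp
    · intro c
      simp only [Matrix.submatrix_apply]
      rcases hcc : ci c with j' | ⟨i, j⟩
      · by_cases hex : ∃ r', ri r' = Sum.inl j'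
        · obtain ⟨r', hr'⟩ := hex
          left
          refine ⟨r', fun r hr => ?_⟩
          exact e1 _ _ (fun h => hr (hri (h.trans hr'.symm)))
        · left
          exact ⟨c, fun r _ => e1 _ _ (fun h => hex ⟨r, h⟩)⟩
      · by_cases hPij : j ∈ P i
        · by_cases he1 : ∃ r', ri r' = Sum.inl j
          · obtain ⟨r1, hr1⟩ := he1
            by_cases he2 : ∃ r', ri r' = Sum.inr i
            · obtain ⟨r2, hr2⟩ := he2
              right
              refine ⟨r1, r2, ?_, ?_, ?_⟩
              · intro h; rw [h, hr2] at hr1; exact Sum.inr_ne_inl hr1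
              · show M (ri r1) _ + M (ri r2) _ = 0
                rw [hr1, hr2]
                simp [hM, hPij]
              · intro r h1 h2
                exact e2 _ _ _ (fun h => h1 (hri (h.trans hr1.symm)))
                  (fun h => h2 (hri (h.trans hr2.symm)))
            · left
              refine ⟨r1, fun r hr => ?_⟩
              exact e2 _ _ _ (fun h => hr (hri (h.trans hr1.symm))) (fun h => he2 ⟨r, h⟩)
          · by_cases he2 : ∃ r', ri r' = Sum.inr i
            · obtain ⟨r2, hr2⟩ := he2
              left
              refine ⟨r2, fun r hr => ?_⟩
              exact e2 _ _ _ (fun h => he1 ⟨r, h⟩) (fun h => hr (hri (h.trans hr2.symm)))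
            · left
              exact ⟨c, fun r _ => e2 _ _ _ (fun h => he1 ⟨r, h⟩) (fun h => he2 ⟨r, h⟩)⟩
        · left
          exact ⟨c, fun r _ => e3 _ _ _ hPij⟩
  · -- IP = LP
    set SIP : Set ℝ := {v : ℝ | ∃ (x : Fin J → ℕ) (z : Fin I → Fin J → ℕ),
          (∀ i j, j ∉ P i → z i j = 0) ∧
          (∀ j : Fin J, b j ≤ (x j : ℤ) +
            ∑ i ∈ Finset.univ.filter (fun i => j ∈ P i), (z i j : ℤ)) ∧
          (∀ i : Fin I, (∑ j ∈ P i, (z i j : ℤ)) ≤ y i) ∧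
          v = ∑ j, ((cx - ce) * (x j : ℝ) -
            ce * ∑ i ∈ Finset.univ.filter (fun i => j ∈ P i), (z i j : ℝ))} with hSIP
    set SLP : Set ℝ := {v : ℝ | ∃ (x : Fin J → ℝ) (z : Fin I → Fin J → ℝ),
          (∀ j, 0 ≤ x j) ∧ (∀ i j, 0 ≤ z i j) ∧
          (∀ i j, j ∉ P i → z i j = 0) ∧
          (∀ j : Fin J, (b j : ℝ) ≤ x j +
            ∑ i ∈ Finset.univ.filter (fun i => j ∈ P i), z i j) ∧
          (∀ i : Fin I, (∑ j ∈ P i, z i j) ≤ (y i : ℝ)) ∧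
          v = ∑ j, ((cx - ce) * x j -
            ce * ∑ i ∈ Finset.univ.filter (fun i => j ∈ P i), z i j)} with hSLP
    by_cases hy : ∀ i, 0 ≤ y i
    · obtain ⟨xh, zh, hs1, hs2, hs3, hdom⟩ := key I J P b y hy
      set vstar : ℝ := ∑ j, ((cx - ce) * (xh j : ℝ) -
        ce * ∑ i ∈ Finset.univ.filter (fun i => j ∈ P i), (zh i j : ℝ)) with hvstar
      have hIP : vstar ∈ SIP := ⟨xh, zh, hs1, hs2, hs3, rfl⟩
      have hsub : SIP ⊆ SLP := by
        rintro v ⟨x, z, h1, h2, h3, h4⟩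
        refine ⟨fun j => (x j : ℝ), fun i j => (z i j : ℝ), fun j => Nat.cast_nonneg _,
          fun i j => Nat.cast_nonneg _, fun i j hij => by simp [h1 i j hij], ?_, ?_, h4⟩
        · intro j
          have h := h2 j
          have h' : ((b j : ℤ) : ℝ) ≤ (((x j : ℤ) +
              ∑ i ∈ Finset.univ.filter (fun i => j ∈ P i), (z i j : ℤ) : ℤ) : ℝ) := by
            exact_mod_cast h
          push_cast at h'
          simpa using h'
        · intro i
          have h := h3 i
          have h' : ((∑ j ∈ P i, (z i j : ℤ) : ℤ) : ℝ) ≤ ((y i : ℤ) : ℝ) := by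
            exact_mod_cast h
          push_cast at h'
          simpa using h'
      have hdomLP : ∀ v ∈ SLP, vstar ≤ v := by
        rintro v ⟨x, z, h1, h2, h3, h4, h5, h6⟩
        rw [h6]
        exact hdom cx ce hce hcx x z h1 h2 h3 h4 h5
      have hbddLP : BddBelow SLP := ⟨vstar, fun v hv => hdomLP v hv⟩
      apply le_antisymm
      · refine le_csInf ⟨vstar, hsub hIP⟩ ?_
        intro v hv
        exact (csInf_le (hbddLP.mono hsub) hIP).trans (hdomLP v hv)
      · exact csInf_le_csInf hbddLP ⟨vstar, hIP⟩ hsub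
    · push_neg at hy
      obtain ⟨i0, hi0⟩ := hy
      have hA : SIP = ∅ := by
        rw [hSIP, Set.eq_empty_iff_forall_notMem]
        rintro v ⟨x, z, h1, h2, h3, h4⟩
        have := h3 i0
        have hnn : (0 : ℤ) ≤ ∑ j ∈ P i0, (z i0 j : ℤ) :=
          Finset.sum_nonneg (fun j _ => Int.natCast_nonneg _)
        linarith
      have hB : SLP = ∅ := by
        rw [hSLP, Set.eq_empty_iff_forall_notMem]
        rintro v ⟨x, z, h1, h2, h3, h4, h5, h6⟩
        have := h5 i0
        have hnn : (0 : ℝ) ≤ ∑ j ∈ P i0, z i0 j :=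
          Finset.sum_nonneg (fun j _ => h2 i0 j)
        have hyr : (y i0 : ℝ) < 0 := by exact_mod_cast hi0
        linarith
      rw [hA, hB]
end

section
/- Consider the recourse cost V(w̃, ỹ, d̃) defined as the minimum of Σ_j (c_x x_j − c_e e_j) over nonnegative integer variables z_{ij} (i ∈ [I], j ∈ P_i), x_j, e_j (j ∈ [J]) subject to Σ_{i : j ∈ P_i} z_{ij} + x_j − e_j = d̃_j − w̃_j for all j and Σ_{j ∈ P_i} z_{ij} ≤ ỹ_i for all i, where d̃_j, w̃_j, ỹ_i are given integers with ỹ_i ≥ 0. Then V(w̃, ỹ, d̃) is unchanged if the integrality restrictions on z, x, e are relaxed to nonnegativity (z_{ij}, x_j, e_j ≥ 0). -/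
open scoped Classical

section RecourseAux
open Finset
namespace RecourseAux


variable {I J : ℕ}

def cov (P : Fin I → Finset (Fin J)) (t : Fin J → ℕ) (z : Fin I → Fin J → ℕ) : ℕ :=
  ∑ j, min (∑ i ∈ Finset.univ.filter (fun i => j ∈ P i), z i j) (t j)

def cut (P : Fin I → Finset (Fin J)) (Y : Fin I → ℕ) (t : Fin J → ℕ) (Q : Finset (Fin J)) : ℕ :=
  ∑ j ∈ Qᶜ, t j + ∑ i ∈ Finset.univ.filter (fun i => (P i ∩ Q).Nonempty), Y i

lemma A_union (P : Fin I → Finset (Fin J)) (Q R : Finset (Fin J)) :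
    Finset.univ.filter (fun i => (P i ∩ (Q ∪ R)).Nonempty)
      = Finset.univ.filter (fun i => (P i ∩ Q).Nonempty)
        ∪ Finset.univ.filter (fun i => (P i ∩ R).Nonempty) := by
  ext i
  simp only [mem_filter, mem_union, mem_univ, true_and]
  constructor
  · rintro ⟨j, hj⟩
    simp only [mem_inter, mem_union] at hj
    rcases hj.2 with h | h
    · exact Or.inl ⟨j, mem_inter.2 ⟨hj.1, h⟩⟩
    · exact Or.inr ⟨j, mem_inter.2 ⟨hj.1, h⟩⟩
  · rintro (⟨j, hj⟩ | ⟨j, hj⟩) <;> simp only [mem_inter] at hj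
    · exact ⟨j, mem_inter.2 ⟨hj.1, mem_union.2 (Or.inl hj.2)⟩⟩
    · exact ⟨j, mem_inter.2 ⟨hj.1, mem_union.2 (Or.inr hj.2)⟩⟩

lemma A_mono (P : Fin I → Finset (Fin J)) {Q R : Finset (Fin J)} (h : Q ⊆ R) :
    Finset.univ.filter (fun i => (P i ∩ Q).Nonempty)
      ⊆ Finset.univ.filter (fun i => (P i ∩ R).Nonempty) := by
  intro i hi
  simp only [mem_filter, mem_univ, true_and] at *
  exact hi.mono (inter_subset_inter (Finset.Subset.refl _) h)

lemma cut_submodular (P : Fin I → Finset (Fin J)) (Y : Fin I → ℕ) (t : Fin J → ℕ)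
    (Q R : Finset (Fin J)) :
    cut P Y t (Q ∪ R) + cut P Y t (Q ∩ R) ≤ cut P Y t Q + cut P Y t R := by
  unfold cut
  have ht : ∑ j ∈ (Q ∪ R)ᶜ, t j + ∑ j ∈ (Q ∩ R)ᶜ, t j
      = ∑ j ∈ Qᶜ, t j + ∑ j ∈ Rᶜ, t j := by
    rw [compl_union, compl_inter, add_comm, Finset.sum_union_inter]
  have hy1 : Finset.univ.filter (fun i => (P i ∩ (Q ∩ R)).Nonempty)
      ⊆ (Finset.univ.filter (fun i => (P i ∩ Q).Nonempty))
        ∩ (Finset.univ.filter (fun i => (P i ∩ R).Nonempty)) := by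
    intro i hi
    simp only [mem_inter]
    exact ⟨A_mono P inter_subset_left hi, A_mono P inter_subset_right hi⟩
  have hy : ∑ i ∈ Finset.univ.filter (fun i => (P i ∩ (Q ∪ R)).Nonempty), Y i
      + ∑ i ∈ Finset.univ.filter (fun i => (P i ∩ (Q ∩ R)).Nonempty), Y i
      ≤ ∑ i ∈ Finset.univ.filter (fun i => (P i ∩ Q).Nonempty), Y i
        + ∑ i ∈ Finset.univ.filter (fun i => (P i ∩ R).Nonempty), Y i := by
    rw [A_union]
    calc _ ≤ (∑ i ∈ (Finset.univ.filter (fun i => (P i ∩ Q).Nonempty))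
            ∪ (Finset.univ.filter (fun i => (P i ∩ R).Nonempty)), Y i)
          + ∑ i ∈ (Finset.univ.filter (fun i => (P i ∩ Q).Nonempty))
            ∩ (Finset.univ.filter (fun i => (P i ∩ R).Nonempty)), Y i := by
            exact Nat.add_le_add_left (Finset.sum_le_sum_of_subset hy1) _
      _ = _ := Finset.sum_union_inter
  omega

lemma cut_sup_eq (P : Fin I → Finset (Fin J)) (Y : Fin I → ℕ) (t : Fin J → ℕ)
    (m : ℕ) (hmin : ∀ Q, m ≤ cut P Y t Q) :
    ∀ s : Finset (Finset (Fin J)), s.Nonempty → (∀ Q ∈ s, cut P Y t Q = m) →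
      cut P Y t (s.sup id) = m := by
  intro s hs
  induction hs using Finset.Nonempty.cons_induction with
  | singleton a => intro h; simpa using h a (by simp)
  | cons a s ha hs ih =>
    intro h
    have hsub := cut_submodular P Y t a (s.sup id)
    have h1 : cut P Y t a = m := h a (by simp)
    have h2 : cut P Y t (s.sup id) = m := ih fun Q hQ => h Q (by simp [hQ])
    have h3 := hmin (a ∩ s.sup id)
    have h4 := hmin (a ∪ s.sup id)
    have : (Finset.cons a s ha).sup id = a ∪ s.sup id := by
      simp [Finset.sup_cons, id]
    rw [this]
    omega

lemma mfmc (P : Fin I → Finset (Fin J)) :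
    ∀ (N : ℕ) (Y : Fin I → ℕ) (t : Fin J → ℕ), (∑ j, t j ≤ N) →
    ∃ (z : Fin I → Fin J → ℕ) (Q : Finset (Fin J)),
      (∀ i j, j ∉ P i → z i j = 0) ∧ (∀ i, ∑ j ∈ P i, z i j ≤ Y i) ∧
      cut P Y t Q ≤ cov P t z := by
  intro N
  induction N with
  | zero =>
    intro Y t ht
    have ht0 : ∀ j, t j = 0 := by
      intro j
      have := Finset.single_le_sum (f := t) (fun j _ => Nat.zero_le _) (mem_univ j)
      omega
    refine ⟨fun _ _ => 0, ∅, fun _ _ _ => rfl, fun i => by simp, ?_⟩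
    have h1 : cut P Y t ∅ = 0 := by
      unfold cut
      have : Finset.univ.filter (fun i => (P i ∩ (∅ : Finset (Fin J))).Nonempty) = ∅ := by
        simp [Finset.not_nonempty_empty]
      simp [this, ht0]
    simp [h1]
  | succ n ih =>
    intro Y t ht
    obtain ⟨Q0, _, hQ0min⟩ := Finset.exists_min_image (univ : Finset (Finset (Fin J)))
      (cut P Y t) ⟨∅, mem_univ ∅⟩
    have hQ0min' : ∀ Q, cut P Y t Q0 ≤ cut P Y t Q := fun Q => hQ0min Q (mem_univ Q)
    by_cases hm : cut P Y t Q0 = 0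
    · refine ⟨fun _ _ => 0, Q0, fun _ _ _ => rfl, fun i => by simp, ?_⟩
      simp [hm]
    -- main case : min cut positive
    · -- subclaim 1 : an edge with positive capacity and demand exists
      have hj0ex : ∃ j0, 0 < t j0 ∧ ∃ i1, j0 ∈ P i1 ∧ 0 < Y i1 := by
        by_contra hno
        push_neg at hno
        set Q' := Finset.univ.filter (fun j => 0 < t j) with hQ'
        have h1 : ∑ j ∈ Q'ᶜ, t j = 0 := by
          apply Finset.sum_eq_zero
          intro j hj
          simp only [hQ', Finset.mem_compl, mem_filter, mem_univ, true_and, not_lt] at hj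
          omega
        have h2 : ∑ i ∈ Finset.univ.filter (fun i => (P i ∩ Q').Nonempty), Y i = 0 := by
          apply Finset.sum_eq_zero
          intro i hi
          simp only [mem_filter, mem_univ, true_and] at hi
          obtain ⟨j, hj⟩ := hi
          simp only [hQ', mem_inter, mem_filter, mem_univ, true_and] at hj
          have := hno j hj.2 i hj.1
          omega
        have : cut P Y t Q' = 0 := by unfold cut; omega
        have := hQ0min' Q'
        omega
      obtain ⟨j0, htj0, i1, hi1P, hi1Y⟩ := hj0ex
      -- subclaim 2 : a good edge exists
      have hedge : ∃ i0 j0', j0' ∈ P i0 ∧ 0 < t j0' ∧ 0 < Y i0 ∧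
          ∀ Q, cut P Y t Q = cut P Y t Q0 → j0' ∉ Q → ¬(P i0 ∩ Q).Nonempty := by
        by_contra hc
        push_neg at hc
        -- bad cut family
        set F := (Finset.univ : Finset (Finset (Fin J))).filter
          (fun Q => cut P Y t Q = cut P Y t Q0 ∧ j0 ∉ Q) with hF
        have hFne : F.Nonempty := by
          obtain ⟨Qb, hb1, hb2, _⟩ := hc i1 j0 hi1P htj0 hi1Y
          exact ⟨Qb, by simp [hF, hb1, hb2]⟩
        set U := F.sup id with hU
        have hUm : cut P Y t U = cut P Y t Q0 := by
          apply cut_sup_eq P Y t _ hQ0min' F hFne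
          intro Q hQ
          simp only [hF, mem_filter] at hQ
          exact hQ.2.1
        have hj0U : j0 ∉ U := by
          intro h
          rw [hU] at h
          obtain ⟨Q, hQF, hQj⟩ := Finset.mem_sup.1 h
          simp only [hF, mem_filter] at hQF
          exact hQF.2.2 hQj
        -- expand cut (U ∪ {j0})
        have hcompl : (U ∪ {j0})ᶜ = Uᶜ \ {j0} := by
          rw [compl_union]
          ext x; simp [Finset.mem_sdiff, Finset.mem_inter]
        have htp : ∑ j ∈ Uᶜ, t j = ∑ j ∈ (U ∪ {j0})ᶜ, t j + t j0 := by
          rw [hcompl]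
          rw [Finset.sum_eq_sum_sdiff_singleton_add (Finset.mem_compl.2 hj0U) t]
        have hAu : Finset.univ.filter (fun i => (P i ∩ (U ∪ {j0})).Nonempty)
            = Finset.univ.filter (fun i => (P i ∩ U).Nonempty)
              ∪ (Finset.univ.filter (fun i => (P i ∩ ({j0} : Finset (Fin J))).Nonempty)
                  \ Finset.univ.filter (fun i => (P i ∩ U).Nonempty)) := by
          rw [A_union, Finset.union_sdiff_self_eq_union]
        have hyp : ∑ i ∈ Finset.univ.filter (fun i => (P i ∩ (U ∪ {j0})).Nonempty), Y i
            = ∑ i ∈ Finset.univ.filter (fun i => (P i ∩ U).Nonempty), Y i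
              + ∑ i ∈ Finset.univ.filter (fun i => (P i ∩ ({j0} : Finset (Fin J))).Nonempty)
                  \ Finset.univ.filter (fun i => (P i ∩ U).Nonempty), Y i := by
          rw [hAu, Finset.sum_union Finset.sdiff_disjoint.symm]
        have hUQ := hQ0min' (U ∪ {j0})
        have hsum : t j0 ≤ ∑ i ∈ Finset.univ.filter
            (fun i => (P i ∩ ({j0} : Finset (Fin J))).Nonempty)
            \ Finset.univ.filter (fun i => (P i ∩ U).Nonempty), Y i := by
          unfold cut at hUQ hUm
          omega
        have hstar : ∃ i', i' ∈ (Finset.univ.filter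
            (fun i => (P i ∩ ({j0} : Finset (Fin J))).Nonempty)
            \ Finset.univ.filter (fun i => (P i ∩ U).Nonempty)) ∧ 0 < Y i' := by
          by_contra hall
          push_neg at hall
          have : ∑ i ∈ Finset.univ.filter
              (fun i => (P i ∩ ({j0} : Finset (Fin J))).Nonempty)
              \ Finset.univ.filter (fun i => (P i ∩ U).Nonempty), Y i = 0 := by
            apply Finset.sum_eq_zero
            intro i hi
            have := hall i hi
            omega
          omega
        obtain ⟨i', hi'mem, hi'Y⟩ := hstar
        rw [Finset.mem_sdiff] at hi'mem
        obtain ⟨hi'A, hi'nU⟩ := hi'mem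
        simp only [mem_filter, mem_univ, true_and] at hi'A
        obtain ⟨j', hj'⟩ := hi'A
        rw [mem_inter, Finset.mem_singleton] at hj'
        have hj0Pi' : j0 ∈ P i' := hj'.2 ▸ hj'.1
        obtain ⟨Qb, hb1, hb2, hb3⟩ := hc i' j0 hj0Pi' htj0 hi'Y
        have hQbF : Qb ∈ F := by simp [hF, hb1, hb2]
        have hQbU : Qb ⊆ U := by
          have := Finset.le_sup (f := id) hQbF
          simpa [hU] using this
        have : (P i' ∩ U).Nonempty := hb3.mono (inter_subset_inter (Finset.Subset.refl _) hQbU)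
        simp only [mem_filter, mem_univ, true_and, not_true] at hi'nU
        exact hi'nU this

      obtain ⟨i0, j0', hP0, ht0, hY0, hgood⟩ := hedge
      -- recurse with reduced capacities
      set t' := Function.update t j0' (t j0' - 1) with ht'
      set Y' := Function.update Y i0 (Y i0 - 1) with hY'
      have hsplit : ∑ j, t j = t j0' + ∑ j ∈ univ.erase j0', t j := by
        rw [Finset.add_sum_erase _ t (mem_univ j0')]
      have hsplit' : ∑ j, t' j = t' j0' + ∑ j ∈ univ.erase j0', t' j := by
        rw [Finset.add_sum_erase _ t' (mem_univ j0')]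
      have herase : ∑ j ∈ univ.erase j0', t' j = ∑ j ∈ univ.erase j0', t j := by
        apply Finset.sum_congr rfl
        intro j hj
        rw [ht']
        exact Function.update_of_ne (Finset.ne_of_mem_erase hj) _ _
      have ht'j0 : t' j0' = t j0' - 1 := by rw [ht']; simp
      have hsum' : ∑ j, t' j ≤ n := by omega
      obtain ⟨z', Q', hsupp', hcap', hcut'⟩ := ih Y' t' hsum'
      -- key bound : every reduced cut is at least mincut - 1
      have hkey : cut P Y t Q0 ≤ cut P Y' t' Q' + 1 := by
        have h1 : ∑ j ∈ Q'ᶜ, t j ≤ ∑ j ∈ Q'ᶜ, t' j + 1 := by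
          by_cases hjQ : j0' ∈ Q'ᶜ
          · rw [Finset.sum_eq_sum_sdiff_singleton_add hjQ t,
              Finset.sum_eq_sum_sdiff_singleton_add hjQ t']
            have : ∑ j ∈ Q'ᶜ \ {j0'}, t' j = ∑ j ∈ Q'ᶜ \ {j0'}, t j := by
              apply Finset.sum_congr rfl
              intro j hj
              rw [ht']
              refine Function.update_of_ne ?_ _ _
              rw [Finset.mem_sdiff, Finset.mem_singleton] at hj
              exact hj.2
            omega
          · have : ∑ j ∈ Q'ᶜ, t' j = ∑ j ∈ Q'ᶜ, t j := by
              apply Finset.sum_congr rfl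
              intro j hj
              rw [ht']
              refine Function.update_of_ne ?_ _ _
              rintro rfl
              exact hjQ hj
            omega
        have h1' : j0' ∈ Q' → ∑ j ∈ Q'ᶜ, t j = ∑ j ∈ Q'ᶜ, t' j := by
          intro hjQ
          symm
          apply Finset.sum_congr rfl
          intro j hj
          rw [ht']
          refine Function.update_of_ne ?_ _ _
          intro h
          exact (Finset.mem_compl.1 (h ▸ hj)) hjQ
        have h2 : ∑ i ∈ Finset.univ.filter (fun i => (P i ∩ Q').Nonempty), Y i
            ≤ ∑ i ∈ Finset.univ.filter (fun i => (P i ∩ Q').Nonempty), Y' i + 1 := by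
          by_cases hiQ : i0 ∈ Finset.univ.filter (fun i => (P i ∩ Q').Nonempty)
          · rw [Finset.sum_eq_sum_sdiff_singleton_add hiQ Y,
              Finset.sum_eq_sum_sdiff_singleton_add hiQ Y']
            have : ∑ i ∈ Finset.univ.filter (fun i => (P i ∩ Q').Nonempty) \ {i0}, Y' i
                = ∑ i ∈ Finset.univ.filter (fun i => (P i ∩ Q').Nonempty) \ {i0}, Y i := by
              apply Finset.sum_congr rfl
              intro i hi
              rw [hY']
              refine Function.update_of_ne ?_ _ _
              rw [Finset.mem_sdiff, Finset.mem_singleton] at hi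
              exact hi.2
            have hY'i0 : Y' i0 = Y i0 - 1 := by rw [hY']; simp
            omega
          · have : ∑ i ∈ Finset.univ.filter (fun i => (P i ∩ Q').Nonempty), Y' i
                = ∑ i ∈ Finset.univ.filter (fun i => (P i ∩ Q').Nonempty), Y i := by
              apply Finset.sum_congr rfl
              intro i hi
              rw [hY']
              refine Function.update_of_ne ?_ _ _
              rintro rfl
              exact hiQ hi
            omega
        have h2' : ¬(P i0 ∩ Q').Nonempty →
            ∑ i ∈ Finset.univ.filter (fun i => (P i ∩ Q').Nonempty), Y i
            = ∑ i ∈ Finset.univ.filter (fun i => (P i ∩ Q').Nonempty), Y' i := by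
          intro hiQ
          symm
          apply Finset.sum_congr rfl
          intro i hi
          rw [hY']
          refine Function.update_of_ne ?_ _ _
          intro h
          simp only [mem_filter, mem_univ, true_and] at hi
          exact hiQ (h ▸ hi)
        by_cases heq : cut P Y t Q' = cut P Y t Q0
        · by_cases hjQ : j0' ∈ Q'
          · have := h1' hjQ
            unfold cut at *
            omega
          · have hne : ¬(P i0 ∩ Q').Nonempty := hgood Q' heq hjQ
            have := h2' hne
            unfold cut at *
            omega
        · have hlt : cut P Y t Q0 < cut P Y t Q' := lt_of_le_of_ne (hQ0min' Q') (fun h => heq h.symm)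
          unfold cut at *
          omega
      -- build the augmented solution
      set z := fun i j => z' i j + (if i = i0 ∧ j = j0' then 1 else 0) with hz
      have hzsupp : ∀ i j, j ∉ P i → z i j = 0 := by
        intro i j hij
        rw [hz]
        simp only
        rw [hsupp' i j hij]
        by_cases h : i = i0 ∧ j = j0'
        · obtain ⟨rfl, rfl⟩ := h
          exact absurd hP0 hij
        · simp [h]
      have hzcap : ∀ i, ∑ j ∈ P i, z i j ≤ Y i := by
        intro i
        rw [hz]
        simp only
        rw [Finset.sum_add_distrib]
        by_cases hi : i = i0
        · subst hi
          have hind : ∑ j ∈ P i, (if i = i ∧ j = j0' then 1 else 0) = 1 := by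
            simp only [true_and]
            rw [Finset.sum_ite_eq' (P i) j0' (fun _ => 1)]
            simp [hP0]
          have := hcap' i
          have hY'i : Y' i = Y i - 1 := by rw [hY']; simp
          omega
        · have hind : ∑ j ∈ P i, (if i = i0 ∧ j = j0' then 1 else 0) = 0 := by
            apply Finset.sum_eq_zero
            intro j _
            simp [hi]
          have := hcap' i
          have hY'i : Y' i = Y i := by rw [hY']; exact Function.update_of_ne hi _ _
          omega
      have hcov : cov P t' z' + 1 ≤ cov P t z := by
        unfold cov
        have e1 : ∑ j, min (∑ i ∈ Finset.univ.filter (fun i => j ∈ P i), z i j) (t j)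
            = min (∑ i ∈ Finset.univ.filter (fun i => j0' ∈ P i), z i j0') (t j0')
              + ∑ j ∈ univ.erase j0',
                min (∑ i ∈ Finset.univ.filter (fun i => j ∈ P i), z i j) (t j) :=
          (Finset.add_sum_erase univ _ (mem_univ j0')).symm
        have e2 : ∑ j, min (∑ i ∈ Finset.univ.filter (fun i => j ∈ P i), z' i j) (t' j)
            = min (∑ i ∈ Finset.univ.filter (fun i => j0' ∈ P i), z' i j0') (t' j0')
              + ∑ j ∈ univ.erase j0',
                min (∑ i ∈ Finset.univ.filter (fun i => j ∈ P i), z' i j) (t' j) :=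
          (Finset.add_sum_erase univ _ (mem_univ j0')).symm
        rw [e1, e2]
        have hterm : ∀ j ∈ univ.erase j0',
            min (∑ i ∈ Finset.univ.filter (fun i => j ∈ P i), z' i j) (t' j)
            ≤ min (∑ i ∈ Finset.univ.filter (fun i => j ∈ P i), z i j) (t j) := by
          intro j hj
          have hjne : j ≠ j0' := Finset.ne_of_mem_erase hj
          have h1 : t' j = t j := by rw [ht']; exact Function.update_of_ne hjne _ _
          have h2 : ∑ i ∈ Finset.univ.filter (fun i => j ∈ P i), z i j
              = ∑ i ∈ Finset.univ.filter (fun i => j ∈ P i), z' i j := by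
            apply Finset.sum_congr rfl
            intro i _
            rw [hz]
            simp [hjne]
          rw [h1, h2]
        have hj0term : min (∑ i ∈ Finset.univ.filter (fun i => j0' ∈ P i), z' i j0') (t' j0') + 1
            ≤ min (∑ i ∈ Finset.univ.filter (fun i => j0' ∈ P i), z i j0') (t j0') := by
          have h2 : ∑ i ∈ Finset.univ.filter (fun i => j0' ∈ P i), z i j0'
              = ∑ i ∈ Finset.univ.filter (fun i => j0' ∈ P i), z' i j0' + 1 := by
            rw [hz]
            simp only [and_true]
            rw [Finset.sum_add_distrib]
            congr 1
            rw [Finset.sum_ite_eq' _ i0 (fun _ => 1)]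
            simp [hP0]
          rw [h2, ht'j0]
          omega
        have := Finset.sum_le_sum hterm
        omega
      exact ⟨z, Q0, hzsupp, hzcap, le_trans hkey (le_trans (by omega)
        (le_trans hcov (le_refl _)))⟩

lemma sum_swap' {M : Type*} [AddCommMonoid M] (P : Fin I → Finset (Fin J))
    (s : Finset (Fin J)) (f : Fin I → Fin J → M) :
    ∑ j ∈ s, ∑ i ∈ Finset.univ.filter (fun i => j ∈ P i), f i j
      = ∑ i, ∑ j ∈ s.filter (fun j => j ∈ P i), f i j := by
  simp_rw [Finset.sum_filter]
  exact Finset.sum_comm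

end RecourseAux
end RecourseAux

open Finset RecourseAux

/-- the recourse cost `V(w̃, ỹ, d̃)` is unchanged if the integrality
restrictions on the second-stage variables `z, x, e` are relaxed to nonnegativity. -/
theorem recourse_integrality_relaxation
    (I J : ℕ) (P : Fin I → Finset (Fin J))
    (cx ce : ℝ) (hce : 0 ≤ ce) (hcx : ce < cx)
    (d w : Fin J → ℤ) (y : Fin I → ℤ) (hy : ∀ i, 0 ≤ y i) :
    sInf {v : ℝ | ∃ (z : Fin I → Fin J → ℕ) (x e : Fin J → ℕ),
        (∀ i j, j ∉ P i → z i j = 0) ∧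
        (∀ j : Fin J,
          (∑ i ∈ Finset.univ.filter (fun i => j ∈ P i), (z i j : ℤ))
            + (x j : ℤ) - (e j : ℤ) = d j - w j) ∧
        (∀ i : Fin I, (∑ j ∈ P i, (z i j : ℤ)) ≤ y i) ∧
        v = ∑ j, (cx * (x j : ℝ) - ce * (e j : ℝ))}
    = sInf {v : ℝ | ∃ (z : Fin I → Fin J → ℝ) (x e : Fin J → ℝ),
        (∀ i j, 0 ≤ z i j) ∧ (∀ j, 0 ≤ x j) ∧ (∀ j, 0 ≤ e j) ∧
        (∀ i j, j ∉ P i → z i j = 0) ∧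
        (∀ j : Fin J,
          (∑ i ∈ Finset.univ.filter (fun i => j ∈ P i), z i j)
            + x j - e j = (d j : ℝ) - (w j : ℝ)) ∧
        (∀ i : Fin I, (∑ j ∈ P i, z i j) ≤ (y i : ℝ)) ∧
        v = ∑ j, (cx * x j - ce * e j)} := by
  set t : Fin J → ℕ := fun j => (d j - w j).toNat with ht
  set Y : Fin I → ℕ := fun i => (y i).toNat with hY
  have hYcast : ∀ i, (Y i : ℤ) = y i := fun i => Int.toNat_of_nonneg (hy i)
  set rR : Fin J → ℝ := fun j => (d j : ℝ) - (w j : ℝ) with hrR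
  have htR : ∀ j, ((t j : ℕ) : ℝ) = max (rR j) 0 := by
    intro j
    have h1 : ((t j : ℕ) : ℤ) = max (d j - w j) 0 := Int.toNat_eq_max _
    have : (((t j : ℕ) : ℤ) : ℝ) = ((max (d j - w j) 0 : ℤ) : ℝ) := by exact_mod_cast h1
    push_cast at this
    rw [hrR]
    push_cast
    convert this using 2
  -- integral max flow
  obtain ⟨z0, Qs, hz0supp, hz0cap, hflow⟩ := mfmc P (∑ j, t j) Y t le_rfl
  -- saturate
  set z1 : Fin I → Fin J → ℕ := fun i j => z0 i j +
      (if h : (P i).Nonempty then (if j = (P i).min' h then Y i - ∑ j' ∈ P i, z0 i j' else 0)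
        else 0) with hz1
  have hz1supp : ∀ i j, j ∉ P i → z1 i j = 0 := by
    intro i j hij
    rw [hz1]
    simp only [hz0supp i j hij, zero_add]
    by_cases h : (P i).Nonempty
    · rw [dif_pos h]
      have : j ≠ (P i).min' h := fun hc => hij (hc ▸ (P i).min'_mem h)
      simp [this]
    · rw [dif_neg h]
  have hz1cap : ∀ i, (P i).Nonempty → ∑ j ∈ P i, z1 i j = Y i := by
    intro i hne
    rw [hz1]
    simp only
    rw [Finset.sum_add_distrib]
    have hpad : ∑ j ∈ P i, (if h : (P i).Nonempty
        then (if j = (P i).min' h then Y i - ∑ j' ∈ P i, z0 i j' else 0) else 0)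
        = Y i - ∑ j' ∈ P i, z0 i j' := by
      rw [Finset.sum_congr rfl (fun j _ => dif_pos hne)]
      rw [Finset.sum_ite_eq' (P i) ((P i).min' hne) (fun _ => Y i - ∑ j' ∈ P i, z0 i j')]
      simp [(P i).min'_mem hne]
    rw [hpad]
    have := hz0cap i
    omega
  have hz1le : ∀ i, ∑ j ∈ P i, z1 i j ≤ Y i := by
    intro i
    by_cases h : (P i).Nonempty
    · rw [hz1cap i h]
    · rw [Finset.not_nonempty_iff_eq_empty.1 h]
      simp
  set S1 : Fin J → ℕ := fun j => ∑ i ∈ Finset.univ.filter (fun i => j ∈ P i), z1 i j with hS1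
  -- coverage of z1 dominates the cut
  have hcov1 : cut P Y t Qs ≤ ∑ j, min (S1 j) (t j) := by
    refine le_trans hflow (Finset.sum_le_sum ?_)
    intro j _
    have : ∑ i ∈ Finset.univ.filter (fun i => j ∈ P i), z0 i j ≤ S1 j := by
      rw [hS1]
      exact Finset.sum_le_sum (fun i _ => by rw [hz1]; simp)
    omega
  -- total mass
  have htot : ∑ j, (S1 j : ℝ) = ∑ i ∈ Finset.univ.filter (fun i => (P i).Nonempty), ((Y i : ℕ) : ℝ) := by
    have h1 : ∑ j, (S1 j : ℝ) = ∑ j ∈ univ, ∑ i ∈ Finset.univ.filter (fun i => j ∈ P i), ((z1 i j : ℕ) : ℝ) := by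
      simp [hS1]
    rw [h1, sum_swap' P univ (fun i j => ((z1 i j : ℕ) : ℝ))]
    have h2 : ∀ i, univ.filter (fun j => j ∈ P i) = P i := fun i => by
      ext j; simp
    rw [Finset.sum_congr rfl (fun i _ => by rw [h2 i])]
    rw [Finset.sum_filter]
    apply Finset.sum_congr rfl
    intro i _
    by_cases h : (P i).Nonempty
    · rw [if_pos h, ← Nat.cast_sum, hz1cap i h]
    · rw [if_neg h, Finset.not_nonempty_iff_eq_empty.1 h]
      simp
  -- the integer candidate
  set xs : Fin J → ℕ := fun j => ((d j - w j) - (S1 j : ℤ)).toNat with hxs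
  set es : Fin J → ℕ := fun j => ((S1 j : ℤ) - (d j - w j)).toNat with hes
  set a : ℝ := ∑ j, (cx * (xs j : ℝ) - ce * (es j : ℝ)) with ha
  -- balance in ℤ
  have hbalZ : ∀ j, (S1 j : ℤ) + (xs j : ℤ) - (es j : ℤ) = d j - w j := by
    intro j
    rw [hxs, hes]
    simp only
    omega
  -- casts for xs
  have hxsN : ∀ j, xs j = t j - min (S1 j) (t j) := by
    intro j
    rw [hxs, ht]
    simp only
    omega
  have hxsR : ∀ j, (xs j : ℝ) = (t j : ℝ) - min ((S1 j : ℝ)) ((t j : ℝ)) := by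
    intro j
    rw [hxsN j]
    have h1 : min (S1 j) (t j) ≤ t j := min_le_right _ _
    rw [Nat.cast_sub h1, Nat.cast_min]
  have hesR : ∀ j, (es j : ℝ) = (S1 j : ℝ) + (xs j : ℝ) - rR j := by
    intro j
    have := hbalZ j
    have h2 : ((S1 j : ℤ) : ℝ) + ((xs j : ℤ) : ℝ) - ((es j : ℤ) : ℝ) = ((d j : ℤ) : ℝ) - ((w j : ℤ) : ℝ) := by
      exact_mod_cast congrArg (fun n : ℤ => (n : ℝ)) this
    push_cast at h2 ⊢
    have h3 : rR j = (d j : ℝ) - (w j : ℝ) := by rw [hrR]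
    linarith
  -- rewrite a
  have haform : a = (cx - ce) * (∑ j, (xs j : ℝ)) - ce * (∑ j, (S1 j : ℝ)) + ce * (∑ j, rR j) := by
    rw [ha]
    have h1 : ∀ j : Fin J, cx * (xs j : ℝ) - ce * (es j : ℝ)
        = (cx - ce) * (xs j : ℝ) - ce * (S1 j : ℝ) + ce * rR j := by
      intro j
      rw [hesR j]
      ring
    rw [Finset.sum_congr rfl (fun j _ => h1 j)]
    rw [Finset.sum_add_distrib, Finset.sum_sub_distrib, ← Finset.mul_sum, ← Finset.mul_sum,
      ← Finset.mul_sum]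
  -- a is attained by an integer solution
  have hmem_int : ∃ (z : Fin I → Fin J → ℕ) (x e : Fin J → ℕ),
      (∀ i j, j ∉ P i → z i j = 0) ∧
      (∀ j : Fin J,
        (∑ i ∈ Finset.univ.filter (fun i => j ∈ P i), (z i j : ℤ))
          + (x j : ℤ) - (e j : ℤ) = d j - w j) ∧
      (∀ i : Fin I, (∑ j ∈ P i, (z i j : ℤ)) ≤ y i) ∧
      a = ∑ j, (cx * (x j : ℝ) - ce * (e j : ℝ)) := by
    refine ⟨z1, xs, es, hz1supp, ?_, ?_, ha⟩
    · intro j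
      have hS1Z : ∑ i ∈ Finset.univ.filter (fun i => j ∈ P i), ((z1 i j : ℕ) : ℤ)
          = ((S1 j : ℕ) : ℤ) := by
        rw [hS1]
        push_cast
        rfl
      rw [hS1Z]
      exact hbalZ j
    · intro i
      have h1 : ∑ j ∈ P i, ((z1 i j : ℕ) : ℤ) = ((∑ j ∈ P i, z1 i j : ℕ) : ℤ) := by push_cast; rfl
      rw [h1, ← hYcast i]
      exact_mod_cast hz1le i
  -- lower bound for all real feasible values
  have hlb : ∀ v : ℝ, (∃ (z : Fin I → Fin J → ℝ) (x e : Fin J → ℝ),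
      (∀ i j, 0 ≤ z i j) ∧ (∀ j, 0 ≤ x j) ∧ (∀ j, 0 ≤ e j) ∧
      (∀ i j, j ∉ P i → z i j = 0) ∧
      (∀ j : Fin J,
        (∑ i ∈ Finset.univ.filter (fun i => j ∈ P i), z i j)
          + x j - e j = (d j : ℝ) - (w j : ℝ)) ∧
      (∀ i : Fin I, (∑ j ∈ P i, z i j) ≤ (y i : ℝ)) ∧
      v = ∑ j, (cx * x j - ce * e j)) → a ≤ v := by
    rintro v ⟨z, x, e, hznn, hxnn, henn, hzsupp, hbal, hcap, hveq⟩
    set S : Fin J → ℝ := fun j => ∑ i ∈ Finset.univ.filter (fun i => j ∈ P i), z i j with hS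
    have hSnn : ∀ j, 0 ≤ S j := by
      intro j
      rw [hS]
      exact Finset.sum_nonneg (fun i _ => hznn i j)
    have he : ∀ j, e j = S j + x j - rR j := by
      intro j
      have h1 := hbal j
      have h2 : rR j = (d j : ℝ) - (w j : ℝ) := by rw [hrR]
      rw [hS]
      simp only
      linarith
    have hvform : v = (cx - ce) * (∑ j, x j) - ce * (∑ j, S j) + ce * (∑ j, rR j) := by
      rw [hveq]
      have h1 : ∀ j : Fin J, cx * x j - ce * e j
          = (cx - ce) * x j - ce * S j + ce * rR j := by
        intro j
        rw [he j]
        ring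
      rw [Finset.sum_congr rfl (fun j _ => h1 j)]
      rw [Finset.sum_add_distrib, Finset.sum_sub_distrib, ← Finset.mul_sum, ← Finset.mul_sum,
        ← Finset.mul_sum]
    -- pointwise demand bound
    have hxlb : ∀ j, ((t j : ℕ) : ℝ) - min (S j) ((t j : ℕ) : ℝ) ≤ x j := by
      intro j
      have htRj := htR j
      rcases le_total (S j) ((t j : ℕ) : ℝ) with h | h
      · rw [min_eq_left h]
        rcases le_total (rR j) 0 with h2 | h2
        · have h3 : ((t j : ℕ) : ℝ) = 0 := by rw [htRj]; exact max_eq_right h2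
          rw [h3]
          have := hSnn j
          have := hxnn j
          linarith
        · have h3 : ((t j : ℕ) : ℝ) = rR j := by rw [htRj]; exact max_eq_left h2
          have h4 := he j
          have h5 := henn j
          rw [h3]
          linarith
      · rw [min_eq_right h]
        have := hxnn j
        linarith
    -- fractional cut bound
    have hScut : ∑ j, min (S j) ((t j : ℕ) : ℝ) ≤ ((cut P Y t Qs : ℕ) : ℝ) := by
      have hsplit : ∑ j, min (S j) ((t j : ℕ) : ℝ)
          = ∑ j ∈ Qs, min (S j) ((t j : ℕ) : ℝ)
            + ∑ j ∈ Qsᶜ, min (S j) ((t j : ℕ) : ℝ) :=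
        (Finset.sum_add_sum_compl Qs _).symm
      have hb1 : ∑ j ∈ Qsᶜ, min (S j) ((t j : ℕ) : ℝ) ≤ ∑ j ∈ Qsᶜ, ((t j : ℕ) : ℝ) :=
        Finset.sum_le_sum (fun j _ => min_le_right _ _)
      have hb2 : ∑ j ∈ Qs, min (S j) ((t j : ℕ) : ℝ)
          ≤ ∑ i ∈ Finset.univ.filter (fun i => (P i ∩ Qs).Nonempty), ((y i : ℤ) : ℝ) := by
        have hstep1 : ∑ j ∈ Qs, min (S j) ((t j : ℕ) : ℝ) ≤ ∑ j ∈ Qs, S j :=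
          Finset.sum_le_sum (fun j _ => min_le_left _ _)
        have hstep2 : ∑ j ∈ Qs, S j
            = ∑ i, ∑ j ∈ Qs.filter (fun j => j ∈ P i), z i j := by
          rw [hS]
          exact sum_swap' P Qs z
        have hstep3 : ∑ i, ∑ j ∈ Qs.filter (fun j => j ∈ P i), z i j
            ≤ ∑ i, (if (P i ∩ Qs).Nonempty then ((y i : ℤ) : ℝ) else 0) := by
          apply Finset.sum_le_sum
          intro i _
          by_cases h : (P i ∩ Qs).Nonempty
          · rw [if_pos h]
            calc ∑ j ∈ Qs.filter (fun j => j ∈ P i), z i j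
                ≤ ∑ j ∈ P i, z i j := by
                  apply Finset.sum_le_sum_of_subset_of_nonneg
                  · intro j hj
                    exact (Finset.mem_filter.1 hj).2
                  · intro j _ _
                    exact hznn i j
              _ ≤ (y i : ℝ) := hcap i
          · rw [if_neg h]
            have hempty : Qs.filter (fun j => j ∈ P i) = ∅ := by
              rw [Finset.filter_eq_empty_iff]
              intro j hj hPij
              exact h ⟨j, Finset.mem_inter.2 ⟨hPij, hj⟩⟩
            rw [hempty]
            simp
        rw [← Finset.sum_filter] at hstep3
        linarith
      have hcutcast : ((cut P Y t Qs : ℕ) : ℝ)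
          = ∑ j ∈ Qsᶜ, ((t j : ℕ) : ℝ)
            + ∑ i ∈ Finset.univ.filter (fun i => (P i ∩ Qs).Nonempty), ((y i : ℤ) : ℝ) := by
        unfold cut
        push_cast
        congr 1
        apply Finset.sum_congr rfl
        intro i _
        rw [← hYcast i]
        push_cast
        rfl
      rw [hcutcast, hsplit]
      linarith
    -- coverage cast
    have hcovR : ((cut P Y t Qs : ℕ) : ℝ) ≤ ∑ j, min ((S1 j : ℝ)) ((t j : ℕ) : ℝ) := by
      have h1 : (((∑ j, min (S1 j) (t j) : ℕ)) : ℝ) = ∑ j, min ((S1 j : ℝ)) ((t j : ℕ) : ℝ) := by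
        push_cast
        rfl
      rw [← h1]
      exact_mod_cast hcov1
    -- total supply bound
    have hSsum : ∑ j, S j ≤ ∑ j, (S1 j : ℝ) := by
      have h1 : ∑ j, S j = ∑ i, ∑ j ∈ P i, z i j := by
        rw [hS]
        have := sum_swap' P univ z
        rw [this]
        apply Finset.sum_congr rfl
        intro i _
        apply Finset.sum_congr ?_ (fun _ _ => rfl)
        ext j; simp
      have h2 : ∑ i, ∑ j ∈ P i, z i j
          ≤ ∑ i, (if (P i).Nonempty then ((Y i : ℕ) : ℝ) else 0) := by
        apply Finset.sum_le_sum
        intro i _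
        by_cases h : (P i).Nonempty
        · rw [if_pos h]
          have := hcap i
          have hYR : ((Y i : ℕ) : ℝ) = (y i : ℝ) := by
            rw [← hYcast i]
            push_cast
            rfl
          rw [hYR]
          exact this
        · rw [if_neg h, Finset.not_nonempty_iff_eq_empty.1 h]
          simp
      rw [← Finset.sum_filter] at h2
      rw [htot, h1]
      exact h2
    -- combine
    have hxsums : ∑ j, (xs j : ℝ) ≤ ∑ j, x j := by
      have h1 : ∑ j, (xs j : ℝ) = ∑ j, (((t j : ℕ) : ℝ) - min ((S1 j : ℝ)) ((t j : ℕ) : ℝ)) :=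
        Finset.sum_congr rfl (fun j _ => hxsR j)
      have h2 : ∑ j, (((t j : ℕ) : ℝ) - min ((S1 j : ℝ)) ((t j : ℕ) : ℝ))
          = ∑ j, ((t j : ℕ) : ℝ) - ∑ j, min ((S1 j : ℝ)) ((t j : ℕ) : ℝ) :=
        Finset.sum_sub_distrib _ _
      have h3 : ∑ j, (((t j : ℕ) : ℝ) - min (S j) ((t j : ℕ) : ℝ))
          = ∑ j, ((t j : ℕ) : ℝ) - ∑ j, min (S j) ((t j : ℕ) : ℝ) :=
        Finset.sum_sub_distrib _ _
      have h4 : ∑ j, (((t j : ℕ) : ℝ) - min (S j) ((t j : ℕ) : ℝ)) ≤ ∑ j, x j :=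
        Finset.sum_le_sum (fun j _ => hxlb j)
      linarith
    have hfin1 : (cx - ce) * (∑ j, (xs j : ℝ)) ≤ (cx - ce) * (∑ j, x j) :=
      mul_le_mul_of_nonneg_left hxsums (by linarith)
    have hfin2 : ce * (∑ j, S j) ≤ ce * (∑ j, (S1 j : ℝ)) :=
      mul_le_mul_of_nonneg_left hSsum hce
    rw [haform, hvform]
    linarith
  -- conclusion
  have hsub : ∀ v : ℝ, (∃ (z : Fin I → Fin J → ℕ) (x e : Fin J → ℕ),
      (∀ i j, j ∉ P i → z i j = 0) ∧
      (∀ j : Fin J,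
        (∑ i ∈ Finset.univ.filter (fun i => j ∈ P i), (z i j : ℤ))
          + (x j : ℤ) - (e j : ℤ) = d j - w j) ∧
      (∀ i : Fin I, (∑ j ∈ P i, (z i j : ℤ)) ≤ y i) ∧
      v = ∑ j, (cx * (x j : ℝ) - ce * (e j : ℝ))) →
      (∃ (z : Fin I → Fin J → ℝ) (x e : Fin J → ℝ),
      (∀ i j, 0 ≤ z i j) ∧ (∀ j, 0 ≤ x j) ∧ (∀ j, 0 ≤ e j) ∧
      (∀ i j, j ∉ P i → z i j = 0) ∧
      (∀ j : Fin J,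
        (∑ i ∈ Finset.univ.filter (fun i => j ∈ P i), z i j)
          + x j - e j = (d j : ℝ) - (w j : ℝ)) ∧
      (∀ i : Fin I, (∑ j ∈ P i, z i j) ≤ (y i : ℝ)) ∧
      v = ∑ j, (cx * x j - ce * e j)) := by
    rintro v ⟨z, x, e, h1, h2, h3, h4⟩
    refine ⟨fun i j => (z i j : ℝ), fun j => (x j : ℝ), fun j => (e j : ℝ),
      fun i j => Nat.cast_nonneg _, fun j => Nat.cast_nonneg _, fun j => Nat.cast_nonneg _,
      fun i j hij => by show ((z i j : ℕ) : ℝ) = 0; rw [h1 i j hij]; norm_num, ?_, ?_, h4⟩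
    · intro j
      have := h2 j
      have hcast : ((∑ i ∈ Finset.univ.filter (fun i => j ∈ P i), (z i j : ℤ)
          + (x j : ℤ) - (e j : ℤ) : ℤ) : ℝ) = ((d j - w j : ℤ) : ℝ) := by
        exact_mod_cast congrArg (fun n : ℤ => (n : ℝ)) this
      push_cast at hcast
      convert hcast using 2
    · intro i
      have := h3 i
      have hcast : ((∑ j ∈ P i, (z i j : ℤ) : ℤ) : ℝ) ≤ ((y i : ℤ) : ℝ) := by
        exact_mod_cast this
      push_cast at hcast
      convert hcast using 2
  obtain ⟨zi, xi, ei, hi1, hi2, hi3, hi4⟩ := hmem_int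
  have hmem_real : a ∈ {v : ℝ | ∃ (z : Fin I → Fin J → ℝ) (x e : Fin J → ℝ),
      (∀ i j, 0 ≤ z i j) ∧ (∀ j, 0 ≤ x j) ∧ (∀ j, 0 ≤ e j) ∧
      (∀ i j, j ∉ P i → z i j = 0) ∧
      (∀ j : Fin J,
        (∑ i ∈ Finset.univ.filter (fun i => j ∈ P i), z i j)
          + x j - e j = (d j : ℝ) - (w j : ℝ)) ∧
      (∀ i : Fin I, (∑ j ∈ P i, z i j) ≤ (y i : ℝ)) ∧
      v = ∑ j, (cx * x j - ce * e j)} := by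
    refine ⟨fun i j => (zi i j : ℝ), fun j => (xi j : ℝ), fun j => (ei j : ℝ),
      fun i j => Nat.cast_nonneg _, fun j => Nat.cast_nonneg _, fun j => Nat.cast_nonneg _,
      fun i j hij => by show ((zi i j : ℕ) : ℝ) = 0; rw [hi1 i j hij]; norm_num, ?_, ?_, hi4⟩
    · intro j
      have := hi2 j
      have h2 : ((∑ i ∈ Finset.univ.filter (fun i => j ∈ P i), (zi i j : ℤ)
          + (xi j : ℤ) - (ei j : ℤ) : ℤ) : ℝ) = ((d j - w j : ℤ) : ℝ) := by
        exact_mod_cast congrArg (fun n : ℤ => (n : ℝ)) this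
      push_cast at h2
      convert h2 using 2
    · intro i
      have := hi3 i
      have h2 : ((∑ j ∈ P i, (zi i j : ℤ) : ℤ) : ℝ) ≤ ((y i : ℤ) : ℝ) := by
        exact_mod_cast this
      push_cast at h2
      convert h2 using 2
  have hI : IsLeast {v : ℝ | ∃ (z : Fin I → Fin J → ℕ) (x e : Fin J → ℕ),
      (∀ i j, j ∉ P i → z i j = 0) ∧
      (∀ j : Fin J,
        (∑ i ∈ Finset.univ.filter (fun i => j ∈ P i), (z i j : ℤ))
          + (x j : ℤ) - (e j : ℤ) = d j - w j) ∧
      (∀ i : Fin I, (∑ j ∈ P i, (z i j : ℤ)) ≤ y i) ∧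
      v = ∑ j, (cx * (x j : ℝ) - ce * (e j : ℝ))} a :=
    ⟨⟨zi, xi, ei, hi1, hi2, hi3, hi4⟩, fun v hv => hlb v (hsub v hv)⟩
  have hR : IsLeast {v : ℝ | ∃ (z : Fin I → Fin J → ℝ) (x e : Fin J → ℝ),
      (∀ i j, 0 ≤ z i j) ∧ (∀ j, 0 ≤ x j) ∧ (∀ j, 0 ≤ e j) ∧
      (∀ i j, j ∉ P i → z i j = 0) ∧
      (∀ j : Fin J,
        (∑ i ∈ Finset.univ.filter (fun i => j ∈ P i), z i j)
          + x j - e j = (d j : ℝ) - (w j : ℝ)) ∧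
      (∀ i : Fin I, (∑ j ∈ P i, z i j) ≤ (y i : ℝ)) ∧
      v = ∑ j, (cx * x j - ce * e j)} a :=
    ⟨hmem_real, fun v hv => hlb v hv⟩
  rw [hI.csInf_eq, hR.csInf_eq]
end

section
/- Let H̄ ⊆ ℝ^{12} be the polyhedron defined by: all variables t_1,t_2,t_3,s_{11},s_{22},s_{33},r_1,r_2,r_3,p_1,p_2,p_3 ≥ 0; s_{11} ≤ t_1 ≤ s_{11} + t_2 ≤ 1; s_{22} ≤ t_2 ≤ s_{22} + t_3 ≤ 1; s_{33} ≤ t_3 ≤ s_{33} + t_1 ≤ 1; t_j + r_j = 1 for j = 1,2,3; and p_1 + s_{11} + t_2 = p_2 + s_{22} + t_3 = p_3 + s_{33} + t_1 = 1. Then the point with t_j = s_{jj} = r_j = 1/2 and p_j = 0 for all j is an extreme point of H̄; in particular H̄ is not an integral polytope. -/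
private lemma both_zero {a b u v : ℝ} (ha : 0 < a) (hb : 0 < b) (hu : 0 ≤ u) (hv : 0 ≤ v)
    (h : a * u + b * v = 0) : u = 0 ∧ v = 0 := by
  constructor <;> nlinarith [mul_nonneg ha.le hu, mul_nonneg hb.le hv]

private lemma forced_eq (y : (Fin 3 → ℝ) × (Fin 3 → ℝ) × (Fin 3 → ℝ) × (Fin 3 → ℝ))
    (hy8 : ∀ j : Fin 3, y.1 j + y.2.2.1 j = 1)
    (hy9 : ∀ j : Fin 3, y.2.2.2 j + y.2.1 j + y.1 (j + 1) = 1)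
    (hp : ∀ j : Fin 3, y.2.2.2 j = 0)
    (hs : ∀ j : Fin 3, y.1 j = y.2.1 j) :
    y = ((fun _ : Fin 3 => (1 / 2 : ℝ)), (fun _ : Fin 3 => (1 / 2 : ℝ)),
      (fun _ : Fin 3 => (1 / 2 : ℝ)), (fun _ : Fin 3 => (0 : ℝ))) := by
  have ht : ∀ j : Fin 3, y.1 j + y.1 (j + 1) = 1 := by
    intro j
    have h9 := hy9 j
    have := hs j
    have := hp j
    linarith
  have e0 := ht 0
  have e1 := ht 1
  have e2 := ht 2
  have f01 : (0 : Fin 3) + 1 = 1 := by decide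
  have f12 : (1 : Fin 3) + 1 = 2 := by decide
  have f20 : (2 : Fin 3) + 1 = 0 := by decide
  rw [f01] at e0; rw [f12] at e1; rw [f20] at e2
  have t0 : y.1 0 = 1 / 2 := by linarith
  have t1 : y.1 1 = 1 / 2 := by linarith
  have t2 : y.1 2 = 1 / 2 := by linarith
  refine Prod.ext ?_ (Prod.ext ?_ (Prod.ext ?_ ?_)) <;> funext j <;> fin_cases j <;>
    simp only []
  · exact t0
  · exact t1
  · exact t2
  · show y.2.1 0 = 1 / 2; rw [← hs 0]; exact t0
  · show y.2.1 1 = 1 / 2; rw [← hs 1]; exact t1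
  · show y.2.1 2 = 1 / 2; rw [← hs 2]; exact t2
  · show y.2.2.1 0 = 1 / 2; have := hy8 0; linarith
  · show y.2.2.1 1 = 1 / 2; have := hy8 1; linarith
  · show y.2.2.1 2 = 1 / 2; have := hy8 2; linarith
  · exact hp 0
  · exact hp 1
  · exact hp 2

/-- for three chained pools, the point with all `t_j = s_{jj} = r_j = 1/2`
and `p_j = 0` is a fractional extreme point of the relaxed polyhedron `H̄`; in
particular `H̄` is not an integral polytope. -/
theorem chained_pools_fractional_extreme_point :
    ((fun _ : Fin 3 => (1 / 2 : ℝ)), (fun _ : Fin 3 => (1 / 2 : ℝ)),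
      (fun _ : Fin 3 => (1 / 2 : ℝ)), (fun _ : Fin 3 => (0 : ℝ))) ∈
      Set.extremePoints ℝ
        {x : (Fin 3 → ℝ) × (Fin 3 → ℝ) × (Fin 3 → ℝ) × (Fin 3 → ℝ) |
          (∀ j, 0 ≤ x.1 j) ∧ (∀ j, 0 ≤ x.2.1 j) ∧ (∀ j, 0 ≤ x.2.2.1 j) ∧
          (∀ j, 0 ≤ x.2.2.2 j) ∧
          (∀ j : Fin 3, x.2.1 j ≤ x.1 j) ∧
          (∀ j : Fin 3, x.1 j ≤ x.2.1 j + x.1 (j + 1)) ∧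
          (∀ j : Fin 3, x.2.1 j + x.1 (j + 1) ≤ 1) ∧
          (∀ j : Fin 3, x.1 j + x.2.2.1 j = 1) ∧
          (∀ j : Fin 3, x.2.2.2 j + x.2.1 j + x.1 (j + 1) = 1)} ∧
    ¬ (∀ x ∈ Set.extremePoints ℝ
        {x : (Fin 3 → ℝ) × (Fin 3 → ℝ) × (Fin 3 → ℝ) × (Fin 3 → ℝ) |
          (∀ j, 0 ≤ x.1 j) ∧ (∀ j, 0 ≤ x.2.1 j) ∧ (∀ j, 0 ≤ x.2.2.1 j) ∧
          (∀ j, 0 ≤ x.2.2.2 j) ∧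
          (∀ j : Fin 3, x.2.1 j ≤ x.1 j) ∧
          (∀ j : Fin 3, x.1 j ≤ x.2.1 j + x.1 (j + 1)) ∧
          (∀ j : Fin 3, x.2.1 j + x.1 (j + 1) ≤ 1) ∧
          (∀ j : Fin 3, x.1 j + x.2.2.1 j = 1) ∧
          (∀ j : Fin 3, x.2.2.2 j + x.2.1 j + x.1 (j + 1) = 1)},
        ∀ j : Fin 3, (∃ n : ℤ, x.1 j = n) ∧ (∃ n : ℤ, x.2.1 j = n) ∧
          (∃ n : ℤ, x.2.2.1 j = n) ∧ (∃ n : ℤ, x.2.2.2 j = n)) := by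
  have hext : ((fun _ : Fin 3 => (1 / 2 : ℝ)), (fun _ : Fin 3 => (1 / 2 : ℝ)),
      (fun _ : Fin 3 => (1 / 2 : ℝ)), (fun _ : Fin 3 => (0 : ℝ))) ∈
      Set.extremePoints ℝ
        {x : (Fin 3 → ℝ) × (Fin 3 → ℝ) × (Fin 3 → ℝ) × (Fin 3 → ℝ) |
          (∀ j, 0 ≤ x.1 j) ∧ (∀ j, 0 ≤ x.2.1 j) ∧ (∀ j, 0 ≤ x.2.2.1 j) ∧
          (∀ j, 0 ≤ x.2.2.2 j) ∧
          (∀ j : Fin 3, x.2.1 j ≤ x.1 j) ∧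
          (∀ j : Fin 3, x.1 j ≤ x.2.1 j + x.1 (j + 1)) ∧
          (∀ j : Fin 3, x.2.1 j + x.1 (j + 1) ≤ 1) ∧
          (∀ j : Fin 3, x.1 j + x.2.2.1 j = 1) ∧
          (∀ j : Fin 3, x.2.2.2 j + x.2.1 j + x.1 (j + 1) = 1)} := by
    constructor
    · refine ⟨fun j => by norm_num, fun j => by norm_num, fun j => by norm_num,
        fun j => le_refl 0, fun j => le_refl _, fun j => by norm_num, fun j => by norm_num,
        fun j => by norm_num, fun j => by norm_num⟩
    · rintro y hy z hz hseg
      obtain ⟨a, b, ha, hb, hab, hsum⟩ := hseg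
      obtain ⟨hy1, hy2, hy3, hy4, hy5, hy6, hy7, hy8, hy9⟩ := hy
      obtain ⟨hz1, hz2, hz3, hz4, hz5, hz6, hz7, hz8, hz9⟩ := hz
      -- componentwise equations
      have ct : ∀ j : Fin 3, a * y.1 j + b * z.1 j = 1 / 2 := by
        intro j
        have := congrArg (fun w : (Fin 3 → ℝ) × (Fin 3 → ℝ) × (Fin 3 → ℝ) × (Fin 3 → ℝ) =>
          w.1 j) hsum
        simpa using this
      have cs : ∀ j : Fin 3, a * y.2.1 j + b * z.2.1 j = 1 / 2 := by
        intro j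
        have := congrArg (fun w : (Fin 3 → ℝ) × (Fin 3 → ℝ) × (Fin 3 → ℝ) × (Fin 3 → ℝ) =>
          w.2.1 j) hsum
        simpa using this
      have cp : ∀ j : Fin 3, a * y.2.2.2 j + b * z.2.2.2 j = 0 := by
        intro j
        have := congrArg (fun w : (Fin 3 → ℝ) × (Fin 3 → ℝ) × (Fin 3 → ℝ) × (Fin 3 → ℝ) =>
          w.2.2.2 j) hsum
        simpa using this
      -- p components are zero for both y and z
      have hpy : ∀ j : Fin 3, y.2.2.2 j = 0 := fun j =>
        (both_zero ha hb (hy4 j) (hz4 j) (cp j)).1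
      have hpz : ∀ j : Fin 3, z.2.2.2 j = 0 := fun j =>
        (both_zero ha hb (hy4 j) (hz4 j) (cp j)).2
      -- s = t for both y and z
      have hd : ∀ j : Fin 3, a * (y.1 j - y.2.1 j) + b * (z.1 j - z.2.1 j) = 0 := by
        intro j
        have h1 := ct j
        have h2 := cs j
        ring_nf
        ring_nf at h1 h2
        linarith
      have hsy : ∀ j : Fin 3, y.1 j = y.2.1 j := by
        intro j
        have := (both_zero ha hb (by linarith [hy5 j]) (by linarith [hz5 j]) (hd j)).1
        linarith
      have hsz : ∀ j : Fin 3, z.1 j = z.2.1 j := by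
        intro j
        have := (both_zero ha hb (by linarith [hy5 j]) (by linarith [hz5 j]) (hd j)).2
        linarith
      exact forced_eq y hy8 hy9 hpy hsy
  refine ⟨hext, fun h => ?_⟩
  obtain ⟨n, hn⟩ := (h _ hext 0).1
  simp only [] at hn
  have h1 : (2 : ℝ) * (n : ℝ) = 1 := by rw [← hn]; norm_num
  have h2 : (2 : ℤ) * n = 1 := by exact_mod_cast h1
  omega
end

section
/- Fix reals c_t_j, c_r_j (j ∈ [J]), c_p_i (i ∈ [I]), where the sets P_1,…,P_I partition a subset of [J] into pairwise disjoint nonempty blocks. The maximum of Σ_{j} (c_t_j t_j + c_r_j r_j) + Σ_i c_p_i p_i over the set H defined by the constraints (for each i separately): Σ_{j ∈ P_i} s_{ij} ≤ 1; s_{ij} ≤ t_j; t_j + s_{iℓ} ≤ 1 for j, ℓ ∈ P_i with j > ℓ; t_j ≤ Σ_{ℓ ∈ P_i} s_{iℓ}; t_j, s_{ij} ∈ {0,1}; t_j + r_j = 1; p_i + Σ_{j ∈ P_i} s_{ij} = 1, equals Σ_{i=1}^I max{ c_p_i + Σ_{ℓ ∈ P_i} c_r_ℓ, max_{j ∈ P_i}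 { c_t_j + Σ_{ℓ ∈ P_i, ℓ < j} max{c_t_ℓ, c_r_ℓ} + Σ_{ℓ ∈ P_i, ℓ > j} c_r_ℓ } }. -/
open Finset

lemma poolSplit {α : Type*} [LinearOrder α] (S : Finset α) (j0 : α) (h : j0 ∈ S)
    (g : α → ℝ) :
    ∑ ℓ ∈ S, g ℓ = (∑ ℓ ∈ S.filter (fun ℓ => ℓ < j0), g ℓ) + g j0 +
      ∑ ℓ ∈ S.filter (fun ℓ => j0 < ℓ), g ℓ := by
  have hins : S.filter (fun ℓ => ¬ ℓ < j0) = insert j0 (S.filter (fun ℓ => j0 < ℓ)) := by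
    ext a
    simp only [mem_filter, mem_insert]
    constructor
    · rintro ⟨ha, hlt⟩
      rcases lt_trichotomy a j0 with h1 | h1 | h1
      · exact absurd h1 hlt
      · exact Or.inl h1
      · exact Or.inr ⟨ha, h1⟩
    · rintro (rfl | ⟨ha, h1⟩)
      · exact ⟨h, lt_irrefl _⟩
      · exact ⟨ha, not_lt.mpr h1.le⟩
  have hnotmem : j0 ∉ S.filter (fun ℓ => j0 < ℓ) := by simp
  rw [← Finset.sum_filter_add_sum_filter_not S (fun ℓ => ℓ < j0), hins,
    Finset.sum_insert hnotmem]
  ring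

lemma pool_ub {J : ℕ} (S : Finset (Fin J)) (hS : S.Nonempty) (ct cr : Fin J → ℝ) (cp0 : ℝ)
    (t r : Fin J → ℝ) (s : Fin J → ℝ) (p0 : ℝ)
    (ht : ∀ j ∈ S, t j = 0 ∨ t j = 1)
    (hs : ∀ j ∈ S, s j = 0 ∨ s j = 1)
    (hsum : (∑ j ∈ S, s j) ≤ 1)
    (hst : ∀ j ∈ S, s j ≤ t j)
    (hts : ∀ j ∈ S, ∀ ℓ ∈ S, ℓ < j → t j + s ℓ ≤ 1)
    (htsum : ∀ j ∈ S, t j ≤ ∑ ℓ ∈ S, s ℓ)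
    (htr : ∀ j ∈ S, t j + r j = 1)
    (hp : p0 + (∑ j ∈ S, s j) = 1) :
    (∑ j ∈ S, (ct j * t j + cr j * r j)) + cp0 * p0 ≤
      max (cp0 + ∑ ℓ ∈ S, cr ℓ)
        (S.sup' hS (fun j => ct j + (∑ ℓ ∈ S.filter (fun ℓ => ℓ < j), max (ct ℓ) (cr ℓ)) +
          ∑ ℓ ∈ S.filter (fun ℓ => j < ℓ), cr ℓ)) := by
  by_cases hall : ∀ j ∈ S, s j = 0
  · -- all s zero: t = 0, r = 1, p0 = 1
    have hsz : (∑ j ∈ S, s j) = 0 := Finset.sum_eq_zero hall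
    have hp0 : p0 = 1 := by linarith
    have htz : ∀ j ∈ S, t j = 0 := by
      intro j hj
      have h1 := htsum j hj
      rw [hsz] at h1
      rcases ht j hj with h | h
      · exact h
      · linarith
    have hr1 : ∀ j ∈ S, r j = 1 := by
      intro j hj
      have := htr j hj
      rw [htz j hj] at this; linarith
    have : (∑ j ∈ S, (ct j * t j + cr j * r j)) = ∑ j ∈ S, cr j := by
      apply Finset.sum_congr rfl
      intro j hj
      rw [htz j hj, hr1 j hj]; ring
    rw [this, hp0]
    calc (∑ j ∈ S, cr j) + cp0 * 1 = cp0 + ∑ ℓ ∈ S, cr ℓ := by ring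
      _ ≤ _ := le_max_left _ _
  · push_neg at hall
    obtain ⟨j0, hj0, hsj0⟩ := hall
    have hsj0' : s j0 = 1 := (hs j0 hj0).resolve_left hsj0
    have hsnn : ∀ j ∈ S, 0 ≤ s j := by
      intro j hj; rcases hs j hj with h | h <;> simp [h]
    have hsum1 : (∑ j ∈ S, s j) = 1 := by
      have := Finset.single_le_sum hsnn hj0
      rw [hsj0'] at this; linarith
    have hp0 : p0 = 0 := by linarith
    have htj0 : t j0 = 1 := by
      have h1 := hst j0 hj0
      rw [hsj0'] at h1
      rcases ht j0 hj0 with h | h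
      · linarith
      · exact h
    have hbig : ∀ ℓ ∈ S, j0 < ℓ → t ℓ = 0 := by
      intro ℓ hℓ hlt
      have h1 := hts ℓ hℓ j0 hj0 hlt
      rw [hsj0'] at h1
      rcases ht ℓ hℓ with h | h
      · exact h
      · linarith
    have key : (∑ j ∈ S, (ct j * t j + cr j * r j)) ≤
        ct j0 + (∑ ℓ ∈ S.filter (fun ℓ => ℓ < j0), max (ct ℓ) (cr ℓ)) +
          ∑ ℓ ∈ S.filter (fun ℓ => j0 < ℓ), cr ℓ := by
      rw [poolSplit S j0 hj0]
      have h1 : (∑ ℓ ∈ S.filter (fun ℓ => ℓ < j0), (ct ℓ * t ℓ + cr ℓ * r ℓ)) ≤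
          ∑ ℓ ∈ S.filter (fun ℓ => ℓ < j0), max (ct ℓ) (cr ℓ) := by
        apply Finset.sum_le_sum
        intro ℓ hℓ
        have hℓS := (Finset.mem_filter.mp hℓ).1
        have hrr : r ℓ = 1 - t ℓ := by have := htr ℓ hℓS; linarith
        rw [hrr]
        rcases ht ℓ hℓS with h | h <;> rw [h]
        · calc ct ℓ * 0 + cr ℓ * (1 - 0) = cr ℓ := by ring
            _ ≤ _ := le_max_right _ _
        · calc ct ℓ * 1 + cr ℓ * (1 - 1) = ct ℓ := by ring
            _ ≤ _ := le_max_left _ _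
      have h2 : ct j0 * t j0 + cr j0 * r j0 = ct j0 := by
        have hrr : r j0 = 0 := by have := htr j0 hj0; linarith
        rw [htj0, hrr]; ring
      have h3 : (∑ ℓ ∈ S.filter (fun ℓ => j0 < ℓ), (ct ℓ * t ℓ + cr ℓ * r ℓ)) =
          ∑ ℓ ∈ S.filter (fun ℓ => j0 < ℓ), cr ℓ := by
        apply Finset.sum_congr rfl
        intro ℓ hℓ
        obtain ⟨hℓS, hlt⟩ := Finset.mem_filter.mp hℓ
        have htℓ := hbig ℓ hℓS hlt
        have hrr : r ℓ = 1 := by have := htr ℓ hℓS; rw [htℓ] at this; linarith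
        rw [htℓ, hrr]; ring
      rw [h2, h3]
      linarith
    calc (∑ j ∈ S, (ct j * t j + cr j * r j)) + cp0 * p0
        = ∑ j ∈ S, (ct j * t j + cr j * r j) := by rw [hp0]; ring
      _ ≤ ct j0 + (∑ ℓ ∈ S.filter (fun ℓ => ℓ < j0), max (ct ℓ) (cr ℓ)) +
          ∑ ℓ ∈ S.filter (fun ℓ => j0 < ℓ), cr ℓ := key
      _ ≤ S.sup' hS _ := Finset.le_sup' (fun j => ct j + (∑ ℓ ∈ S.filter (fun ℓ => ℓ < j), max (ct ℓ) (cr ℓ)) + ∑ ℓ ∈ S.filter (fun ℓ => j < ℓ), cr ℓ) hj0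
      _ ≤ _ := le_max_right _ _

/-- closed form for the maximization over the disjoint-pools
mixed-integer set `H`: the value separates by pool and each block contributes the
single-pool closed form. -/
theorem disjoint_pools_closed_form
    (I J : ℕ) (P : Fin I → Finset (Fin J))
    (hdisj : ∀ i1 i2 : Fin I, i1 ≠ i2 → Disjoint (P i1) (P i2))
    (hne : ∀ i, (P i).Nonempty)
    (ct cr : Fin J → ℝ) (cp : Fin I → ℝ) :
    IsGreatest
      {v : ℝ | ∃ (t r : Fin J → ℝ) (s : Fin I → Fin J → ℝ) (p : Fin I → ℝ),
        (∀ i : Fin I, ∀ j ∈ P i, t j = 0 ∨ t j = 1) ∧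
        (∀ i : Fin I, ∀ j ∈ P i, s i j = 0 ∨ s i j = 1) ∧
        (∀ i : Fin I, (∑ j ∈ P i, s i j) ≤ 1) ∧
        (∀ i : Fin I, ∀ j ∈ P i, s i j ≤ t j) ∧
        (∀ i : Fin I, ∀ j ∈ P i, ∀ ℓ ∈ P i, ℓ < j → t j + s i ℓ ≤ 1) ∧
        (∀ i : Fin I, ∀ j ∈ P i, t j ≤ ∑ ℓ ∈ P i, s i ℓ) ∧
        (∀ i : Fin I, ∀ j ∈ P i, t j + r j = 1) ∧
        (∀ i : Fin I, p i + (∑ j ∈ P i, s i j) = 1) ∧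
        v = (∑ j ∈ Finset.univ.biUnion P, (ct j * t j + cr j * r j)) +
              ∑ i, cp i * p i}
      (∑ i, max (cp i + ∑ ℓ ∈ P i, cr ℓ)
        ((P i).sup' (hne i) (fun j =>
          ct j + (∑ ℓ ∈ (P i).filter (fun ℓ => ℓ < j), max (ct ℓ) (cr ℓ)) +
            ∑ ℓ ∈ (P i).filter (fun ℓ => j < ℓ), cr ℓ))) := by
  classical
  have hPD : (↑(Finset.univ : Finset (Fin I)) : Set (Fin I)).PairwiseDisjoint P :=
    fun i _ j _ h => hdisj i j h
  have hbi : ∀ (g : Fin J → ℝ),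
      (∑ j ∈ Finset.univ.biUnion P, g j) = ∑ i, ∑ j ∈ P i, g j :=
    fun g => Finset.sum_biUnion hPD
  set G : Fin I → ℝ := fun i => (P i).sup' (hne i) (fun j =>
      ct j + (∑ ℓ ∈ (P i).filter (fun ℓ => ℓ < j), max (ct ℓ) (cr ℓ)) +
        ∑ ℓ ∈ (P i).filter (fun ℓ => j < ℓ), cr ℓ) with hGdef
  constructor
  · -- membership
    have hjex : ∀ i, ∃ j ∈ P i, G i =
        ct j + (∑ ℓ ∈ (P i).filter (fun ℓ => ℓ < j), max (ct ℓ) (cr ℓ)) +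
          ∑ ℓ ∈ (P i).filter (fun ℓ => j < ℓ), cr ℓ :=
      fun i => Finset.exists_mem_eq_sup' (hne i) _
    choose j0 hj0mem hj0val using hjex
    set A : Fin I → Prop := fun i => G i ≤ cp i + ∑ ℓ ∈ P i, cr ℓ with hAdef
    set f : Fin I → Fin J → ℝ := fun i j =>
      if A i then 0 else if j = j0 i ∨ (j < j0 i ∧ cr j ≤ ct j) then 1 else 0 with hfdef
    set s : Fin I → Fin J → ℝ := fun i j => if ¬ A i ∧ j = j0 i then 1 else 0 with hsdef
    set p : Fin I → ℝ := fun i => if A i then 1 else 0 with hpdef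
    set t : Fin J → ℝ := fun j => if h : ∃ i, j ∈ P i then f h.choose j else 0 with htdef
    set r : Fin J → ℝ := fun j => 1 - t j with hrdef
    have htf : ∀ i, ∀ j ∈ P i, t j = f i j := by
      intro i j hj
      have h : ∃ i, j ∈ P i := ⟨i, hj⟩
      have hch : h.choose = i := by
        by_contra hne'
        exact (Finset.disjoint_left.mp (hdisj h.choose i hne')) h.choose_spec hj
      simp only [htdef]
      rw [dif_pos h, hch]
    have hssum : ∀ i, (∑ j ∈ P i, s i j) = if A i then 0 else 1 := by
      intro i
      by_cases hA : A i
      · simp [hsdef, hA]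
      · simp only [hsdef, hA, not_false_iff, true_and, if_neg]
        rw [Finset.sum_ite_eq' (P i) (j0 i) (fun _ => (1:ℝ))]
        simp [hj0mem i, hA]
    refine ⟨t, r, s, p, ?_, ?_, ?_, ?_, ?_, ?_, ?_, ?_, ?_⟩
    · intro i j hj
      rw [htf i j hj]
      simp only [hfdef]
      split_ifs <;> simp
    · intro i j hj
      simp only [hsdef]
      split_ifs <;> simp
    · intro i
      rw [hssum i]
      split_ifs <;> norm_num
    · intro i j hj
      rw [htf i j hj]
      simp only [hsdef, hfdef]
      by_cases hA : A i
      · simp [hA]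
      · split_ifs <;> first | tauto | norm_num
    · intro i j hj ℓ hℓ hlt
      rw [htf i j hj]
      simp only [hsdef, hfdef]
      by_cases hA : A i
      · simp [hA]
      · by_cases hcj : j = j0 i ∨ (j < j0 i ∧ cr j ≤ ct j)
        · have hℓlt : ℓ < j0 i := by
            rcases hcj with rfl | ⟨h', _⟩
            · exact hlt
            · exact hlt.trans h'
          simp [hA, hcj, ne_of_lt hℓlt]
        · simp only [if_neg hA, if_neg hcj]
          split_ifs <;> norm_num
    · intro i j hj
      rw [htf i j hj, hssum i]
      simp only [hfdef]
      by_cases hA : A i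
      · simp [hA]
      · simp only [if_neg hA]
        split_ifs <;> norm_num
    · intro i j hj
      rw [hrdef]
      ring
    · intro i
      rw [hssum i]
      simp only [hpdef]
      by_cases hA : A i <;> simp [hA]
    · -- value
      rw [hbi]
      rw [← Finset.sum_add_distrib]
      apply Finset.sum_congr rfl
      intro i _
      have hinner : (∑ j ∈ P i, (ct j * t j + cr j * r j)) =
          ∑ j ∈ P i, (ct j * f i j + cr j * (1 - f i j)) := by
        simp only [hrdef]
        apply Finset.sum_congr rfl
        intro j hj
        rw [htf i j hj]
      rw [hinner]
      by_cases hA : A i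
      · have h1 : (∑ j ∈ P i, (ct j * f i j + cr j * (1 - f i j))) = ∑ j ∈ P i, cr j := by
          apply Finset.sum_congr rfl
          intro j hj
          simp [hfdef, hA]
        have h2 : p i = 1 := by simp [hpdef, hA]
        rw [h1, h2, max_eq_left hA]
        ring
      · have h2 : p i = 0 := by simp [hpdef, hA]
        have hsplit := poolSplit (P i) (j0 i) (hj0mem i)
          (fun j => ct j * f i j + cr j * (1 - f i j))
        have hlt : (∑ ℓ ∈ (P i).filter (fun ℓ => ℓ < j0 i),
            (ct ℓ * f i ℓ + cr ℓ * (1 - f i ℓ))) =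
            ∑ ℓ ∈ (P i).filter (fun ℓ => ℓ < j0 i), max (ct ℓ) (cr ℓ) := by
          apply Finset.sum_congr rfl
          intro ℓ hℓ
          have hℓlt := (Finset.mem_filter.mp hℓ).2
          have hne' : ℓ ≠ j0 i := ne_of_lt hℓlt
          by_cases hc : cr ℓ ≤ ct ℓ
          · have : f i ℓ = 1 := by simp [hfdef, hA, hne', hℓlt, hc]
            rw [this, max_eq_left hc]
            ring
          · have : f i ℓ = 0 := by simp [hfdef, hA, hne', hc]
            rw [this, max_eq_right (le_of_not_ge hc)]
            ring
        have hmid : ct (j0 i) * f i (j0 i) + cr (j0 i) * (1 - f i (j0 i)) = ct (j0 i) := by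
          have : f i (j0 i) = 1 := by simp [hfdef, hA]
          rw [this]; ring
        have hgt : (∑ ℓ ∈ (P i).filter (fun ℓ => j0 i < ℓ),
            (ct ℓ * f i ℓ + cr ℓ * (1 - f i ℓ))) =
            ∑ ℓ ∈ (P i).filter (fun ℓ => j0 i < ℓ), cr ℓ := by
          apply Finset.sum_congr rfl
          intro ℓ hℓ
          have hℓgt := (Finset.mem_filter.mp hℓ).2
          have hne' : ℓ ≠ j0 i := ne_of_gt hℓgt
          have hnlt : ¬ ℓ < j0 i := not_lt.mpr hℓgt.le
          have : f i ℓ = 0 := by simp [hfdef, hA, hne', hnlt]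
          rw [this]; ring
        rw [hsplit, hlt, hmid, hgt, h2, max_eq_right (le_of_not_ge hA)]
        rw [hj0val i]
        ring
  · -- upper bound
    rintro v ⟨t, r, s, p, h1, h2, h3, h4, h5, h6, h7, h8, h9⟩
    rw [h9, hbi, ← Finset.sum_add_distrib]
    apply Finset.sum_le_sum
    intro i _
    exact pool_ub (P i) (hne i) ct cr (cp i) t r (s i) (p i)
      (h1 i) (h2 i) (h3 i) (h4 i) (h5 i) (h6 i) (h7 i) (h8 i)
end
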